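/- arXiv:1207.2829 — 9 statements merged into one kernel-verified Lean document; each statement's English description precedes it below -/
import Mathlib

section
/- Let n, k, t be positive integers with t = ⌊(n+1)/(k+1)⌋. Define the (n+1−t) × n matrix A whose i-th row has ones in columns i through i+t−1 and zeros elsewhere. Then for every nonzero w ∈ ℝⁿ with A w = 0 and every index set T ⊆ {1,…,n} with |T| ≤ k, we have ‖w_T‖₁ < ‖w‖₁ / 2, where w_T is the restriction of w to indices in T. -/
/-- Null space property of the sliding-window line-graph measurement matrix:
for every nonzero null vector `w` and every index set `T` of size at most `k`,
`‖w_T‖₁ < ‖w‖₁ / 2`. -/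
theorem stmt_1 (n k t : ℕ) (hn : 0 < n) (hk : 0 < k) (ht0 : 0 < t)
    (ht : t = (n + 1) / (k + 1))
    (A : Matrix (Fin (n + 1 - t)) (Fin n) ℝ)
    (hA : ∀ i j, A i j = if i.val ≤ j.val ∧ j.val < i.val + t then 1 else 0)
    (w : Fin n → ℝ) (hw : w ≠ 0) (hAw : A.mulVec w = 0) :
    ∀ T : Finset (Fin n), T.card ≤ k →
      ∑ j ∈ T, |w j| < (∑ j, |w j|) / 2 := by
  intro T hT
  -- basic arithmetic
  have hkt : (k + 1) * t ≤ n + 1 := by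
    rw [ht, mul_comm]; exact Nat.div_mul_le_self (n + 1) (k + 1)
  have h2t : 2 * t ≤ n + 1 :=
    le_trans (Nat.mul_le_mul_right t (by omega)) hkt
  have htn : t ≤ n := by omega
  have hktt : k * t + t ≤ n + 1 := by
    have : (k + 1) * t = k * t + t := by ring
    omega
  have hktn : k * t ≤ n := by
    have h := hktt; omega
  -- extension of w to ℕ
  set v : ℕ → ℝ := fun j => if h : j < n then w ⟨j, h⟩ else 0 with hv
  have hvw : ∀ j : Fin n, v j.val = w j := by
    intro j; simp [hv, j.isLt]
  -- window sums are zero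
  have hwin : ∀ i : ℕ, i + t ≤ n → ∑ r ∈ Finset.range t, v (i + r) = 0 := by
    intro i hi
    have hilt : i < n + 1 - t := by omega
    have h0 := congrFun hAw ⟨i, hilt⟩
    simp only [Matrix.mulVec, dotProduct, hA, ite_mul, one_mul, zero_mul,
      Pi.zero_apply] at h0
    have h1 : ∀ x : Fin n, (if i ≤ x.val ∧ x.val < i + t then w x else 0)
        = (fun j : ℕ => if i ≤ j ∧ j < i + t then v j else 0) x.val := by
      intro x
      by_cases hx : i ≤ x.val ∧ x.val < i + t
      · simp [hx, hvw]
      · simp [hx]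
    rw [Finset.sum_congr rfl (fun x _ => h1 x),
      Fin.sum_univ_eq_sum_range (fun j => if i ≤ j ∧ j < i + t then v j else 0) n] at h0
    rw [← h0]
    rw [Finset.sum_ite, Finset.sum_const_zero, add_zero]
    have hfil : Finset.filter (fun j => i ≤ j ∧ j < i + t) (Finset.range n)
        = Finset.Ico i (i + t) := by
      ext j; simp [Finset.mem_Ico]; omega
    rw [hfil, Finset.sum_Ico_eq_sum_range]
    simp
  -- periodicity
  have hper : ∀ i : ℕ, i + t < n → v (i + t) = v i := by
    intro i hi
    obtain ⟨s, hs⟩ : ∃ s, t = s + 1 := ⟨t - 1, by omega⟩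
    have h1 := hwin i (by omega)
    have h2 := hwin (i + 1) (by omega)
    rw [hs, Finset.sum_range_succ'] at h1
    rw [hs, Finset.sum_range_succ] at h2
    have he : ∀ r, i + (r + 1) = i + 1 + r := by intro r; ring
    rw [Finset.sum_congr rfl (fun r _ => by rw [he r])] at h1
    have : i + 1 + s = i + t := by omega
    rw [this] at h2
    simp only [add_zero] at h1
    linarith
  -- reduction mod t
  have hmod : ∀ j, j < n → v j = v (j % t) := by
    intro j
    induction j using Nat.strong_induction_on with
    | _ j ih =>
      intro hj
      rcases lt_or_ge j t with h | h
      · rw [Nat.mod_eq_of_lt h]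
      · have h1 : j - t + t = j := by omega
        have h2 : v j = v (j - t) := by
          have := hper (j - t) (by omega)
          rwa [h1] at this
        rw [h2, ih (j - t) (by omega) (by omega), Nat.mod_eq_sub_mod h]
  set P : ℝ := ∑ r ∈ Finset.range t, |v r| with hP
  -- every |v r| is at most P/2
  have hhalf : ∀ r, r < t → 2 * |v r| ≤ P := by
    intro r hr
    have h0 := hwin 0 (by omega)
    simp only [zero_add] at h0
    have hr' : r ∈ Finset.range t := Finset.mem_range.2 hr
    have h1 : v r + ∑ x ∈ (Finset.range t).erase r, v x = 0 := by
      rw [Finset.add_sum_erase _ v hr']; exact h0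
    have h2 : |v r| = |∑ x ∈ (Finset.range t).erase r, v x| := by
      rw [show v r = -(∑ x ∈ (Finset.range t).erase r, v x) by linarith, abs_neg]
    have h3 := Finset.abs_sum_le_sum_abs v ((Finset.range t).erase r)
    have h4 : ∑ x ∈ (Finset.range t).erase r, |v x| = P - |v r| :=
      Finset.sum_erase_eq_sub hr'
    rw [← h2] at h3
    linarith
  have hPnn : 0 ≤ P := Finset.sum_nonneg (fun r _ => abs_nonneg _)
  -- P is positive
  have hPpos : 0 < P := by
    rcases hPnn.lt_or_eq with h | h
    · exact h
    · exfalso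
      apply hw
      have hz : ∀ r ∈ Finset.range t, |v r| = 0 := by
        intro r hr
        have := (Finset.sum_eq_zero_iff_of_nonneg (fun r _ => abs_nonneg (v r))).1 h.symm
        exact this r hr
      funext j
      have h1 : v j.val = v (j.val % t) := hmod j.val j.isLt
      have h2 : |v (j.val % t)| = 0 :=
        hz _ (Finset.mem_range.2 (Nat.mod_lt _ ht0))
      have := abs_eq_zero.1 h2
      rw [← hvw j, h1, this]; rfl
  -- total sum rewritten over range n
  have htot : ∑ j, |w j| = ∑ j ∈ Finset.range n, |v j| := by
    rw [← Fin.sum_univ_eq_sum_range (fun j => |v j|) n]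
    exact Finset.sum_congr rfl (fun j _ => by rw [hvw])
  -- sum over full blocks
  have hblocks : ∀ m : ℕ, m * t ≤ n →
      ∑ j ∈ Finset.range (m * t), |v j| = (m : ℝ) * P := by
    intro m
    induction m with
    | zero => simp
    | succ m ih =>
      intro hm
      have hm' : m * t ≤ n := by
        have : m * t ≤ (m + 1) * t := Nat.mul_le_mul_right t (by omega)
        omega
      have hstep : (m + 1) * t = m * t + t := by ring
      rw [hstep, Finset.sum_range_add, ih hm']
      have h1 : ∑ x ∈ Finset.range t, |v (m * t + x)| = P := by
        apply Finset.sum_congr rfl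
        intro r hr
        have hr' := Finset.mem_range.1 hr
        have hlt : m * t + r < n := by
          have : m * t + r < (m + 1) * t := by rw [hstep]; omega
          omega
        rw [hmod _ hlt, show m * t + r = r + m * t by ring,
          Nat.add_mul_mod_self_right, Nat.mod_eq_of_lt hr']
      rw [h1]
      push_cast
      ring
  -- lower bound of the total sum
  have hlow : (k : ℝ) * P + P / 2 ≤ ∑ j ∈ Finset.range n, |v j| := by
    have hsplit : ∑ j ∈ Finset.range (k * t), |v j|
        + ∑ j ∈ Finset.Ico (k * t) n, |v j| = ∑ j ∈ Finset.range n, |v j| := by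
      rw [Finset.range_eq_Ico, Finset.range_eq_Ico]
      exact Finset.sum_Ico_consecutive _ (Nat.zero_le _) hktn
    obtain ⟨s, hs⟩ : ∃ s, t = s + 1 := ⟨t - 1, by omega⟩
    have htail : P / 2 ≤ ∑ j ∈ Finset.Ico (k * t) n, |v j| := by
      have hsub : Finset.Ico (k * t) (k * t + s) ⊆ Finset.Ico (k * t) n := by
        apply Finset.Ico_subset_Ico le_rfl
        omega
      have h1 : ∑ j ∈ Finset.Ico (k * t) (k * t + s), |v j|
          ≤ ∑ j ∈ Finset.Ico (k * t) n, |v j| :=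
        Finset.sum_le_sum_of_subset_of_nonneg hsub (fun j _ _ => abs_nonneg _)
      have h2 : ∑ j ∈ Finset.Ico (k * t) (k * t + s), |v j|
          = ∑ r ∈ Finset.range s, |v r| := by
        rw [Finset.sum_Ico_eq_sum_range]
        simp only [Nat.add_sub_cancel_left]
        apply Finset.sum_congr rfl
        intro r hr
        have hr' := Finset.mem_range.1 hr
        have hlt : k * t + r < n := by omega
        rw [hmod _ hlt, show k * t + r = r + k * t by ring,
          Nat.add_mul_mod_self_right, Nat.mod_eq_of_lt (by omega)]
      have h3 : ∑ r ∈ Finset.range s, |v r| = P - |v s| := by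
        have : P = ∑ r ∈ Finset.range s, |v r| + |v s| := by
          rw [hP, hs, Finset.sum_range_succ]
        linarith
      have h4 := hhalf s (by omega)
      linarith
    have hhead := hblocks k hktn
    linarith [hsplit, hhead, htail]
  -- upper bound of the T sum
  have hTb : 2 * ∑ j ∈ T, |w j| ≤ (k : ℝ) * P := by
    have h1 : ∀ j ∈ T, 2 * |w j| ≤ P := by
      intro j _
      have := hhalf (j.val % t) (Nat.mod_lt _ ht0)
      rw [← hmod _ j.isLt, hvw] at this
      exact this
    calc 2 * ∑ j ∈ T, |w j| = ∑ j ∈ T, 2 * |w j| := by rw [Finset.mul_sum]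
      _ ≤ ∑ _j ∈ T, P := Finset.sum_le_sum h1
      _ = (T.card : ℝ) * P := by rw [Finset.sum_const, nsmul_eq_mul]
      _ ≤ (k : ℝ) * P := by
          apply mul_le_mul_of_nonneg_right _ hPnn
          exact_mod_cast hT
  rw [htot]
  linarith
end

section
/- Let k ≥ 2 and n be positive integers, t = ⌈n/(2k)⌉ ≥ 2. Define D^k as the 2k × 2k lower bidiagonal 0-1 matrix with ones on the main diagonal and subdiagonal. Construct the (2kt−t+1) × 2kt matrix A by placing copies of D^k in blocks: for i = 1,…,t, the submatrix of A with rows {(i−1)(2k−1)+1, …, i(2k−1)+1} and columns {2k(i−1)+1, …, 2ki} equals D^k, with all other entries zero. Then every nonzero vector z ∈ ℝ^{2kt} with A z = 0 has at least 2k+1 nonzero entries. -/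
lemma divUniq {m q s q' s' : ℕ} (hs : s < m) (hs' : s' < m)
    (h : q * m + s = q' * m + s') : q = q' ∧ s = s' := by
  have hm : 0 < m := lt_of_le_of_lt (Nat.zero_le s) hs
  have a1 : (m * q + s) / m = q := by
    rw [Nat.mul_add_div hm, Nat.div_eq_of_lt hs, Nat.add_zero]
  have a2 : (m * q' + s') / m = q' := by
    rw [Nat.mul_add_div hm, Nat.div_eq_of_lt hs', Nat.add_zero]
  have h' : m * q + s = m * q' + s' := by rw [mul_comm m q, mul_comm m q']; exact h
  have e1 : q = q' := by rw [← a1, ← a2, h']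
  refine ⟨e1, ?_⟩
  subst e1
  exact Nat.add_left_cancel h'

lemma diagSolve {m q s q0 j : ℕ} (hs : s ≤ m) (hj : j < m)
    (h : q * m + s = q0 * m + j) :
    (q = q0 ∧ s = j) ∨ (q + 1 = q0 ∧ s = m ∧ j = 0) := by
  rcases Nat.lt_or_ge s m with hs' | hs'
  · exact Or.inl (divUniq hs' hj h)
  · have hsm : s = m := le_antisymm hs hs'
    have h2 : (q + 1) * m + 0 = q0 * m + j := by
      have e : (q + 1) * m = q * m + m := by ring
      omega
    obtain ⟨e1, e2⟩ := divUniq (lt_of_le_of_lt (Nat.zero_le j) hj) hj h2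
    exact Or.inr ⟨e1, hsm, e2.symm⟩

lemma blt {k q0 t j : ℕ} (h1 : q0 < t) (h2 : j < 2*k) : 2*k*q0 + j < 2*k*t := by
  have e : 2*k*(q0+1) = 2*k*q0 + 2*k := by ring
  have h3 : 2*k*(q0+1) ≤ 2*k*t := Nat.mul_le_mul_left _ h1
  omega

lemma divmod {m q s : ℕ} (hm : 0 < m) (hs : s < m) :
    (m * q + s) / m = q ∧ (m * q + s) % m = s := by
  refine ⟨?_, ?_⟩
  · rw [Nat.mul_add_div hm, Nat.div_eq_of_lt hs, Nat.add_zero]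
  · rw [Nat.mul_add_mod, Nat.mod_eq_of_lt hs]

/-- The block-bidiagonal measurement matrix built from `D^k` (ones on the main
diagonal and subdiagonal of each `2k × 2k` block, blocks overlapping in one row):
every nonzero null vector has at least `2k+1` nonzero entries. -/
theorem stmt_4 (n k t : ℕ) (hk : 2 ≤ k)
    (ht : t = (n + 2 * k - 1) / (2 * k)) (ht2 : 2 ≤ t)
    (A : Matrix (Fin (2 * k * t - t + 1)) (Fin (2 * k * t)) ℝ)
    (hA : ∀ r c, A r c =
      if r.val = c.val / (2 * k) * (2 * k - 1) + c.val % (2 * k)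
        ∨ (c.val % (2 * k) < 2 * k - 1 ∧
            r.val = c.val / (2 * k) * (2 * k - 1) + c.val % (2 * k) + 1)
      then 1 else 0)
    (z : Fin (2 * k * t) → ℝ) (hz : z ≠ 0) (hAz : A.mulVec z = 0) :
    2 * k + 1 ≤ {j | z j ≠ 0}.ncard := by
  classical
  have hNpos : 0 < 2*k*t := Nat.mul_pos (by omega) (by omega)
  set Z : ℕ → ℝ := fun c => if h : c < 2*k*t then z ⟨c, h⟩ else 0 with hZdef
  have hZz : ∀ c : Fin (2*k*t), Z c.val = z c := by
    intro c
    simp only [hZdef]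
    rw [dif_pos c.isLt]
  -- row equations
  have hrow : ∀ r, (hr : r < 2*k*t - t + 1) →
      ∑ c ∈ Finset.range (2*k*t),
        (if r = c / (2*k) * (2*k-1) + c % (2*k)
            ∨ (c % (2*k) < 2*k-1 ∧ r = c / (2*k) * (2*k-1) + c % (2*k) + 1)
         then Z c else 0) = 0 := by
    intro r hr
    have h0 : A.mulVec z ⟨r, hr⟩ = 0 := congrFun hAz _
    simp only [Matrix.mulVec, dotProduct] at h0
    rw [← Fin.sum_univ_eq_sum_range]
    rw [show (∑ c : Fin (2*k*t),
        (if r = c.val / (2*k) * (2*k-1) + c.val % (2*k)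
            ∨ (c.val % (2*k) < 2*k-1 ∧ r = c.val / (2*k) * (2*k-1) + c.val % (2*k) + 1)
         then Z c.val else 0)) = ∑ j, A ⟨r, hr⟩ j * z j from
      Finset.sum_congr rfl (fun c _ => ?_)]
    · exact h0
    rw [hA]
    by_cases hc : (r = c.val / (2*k) * (2*k-1) + c.val % (2*k)
            ∨ (c.val % (2*k) < 2*k-1 ∧ r = c.val / (2*k) * (2*k-1) + c.val % (2*k) + 1))
    · simp [hc, hZz]
    · simp [hc]
  have hrowBound : ∀ r, r ≤ t*(2*k-1) → r < 2*k*t - t + 1 := by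
    intro r hr
    have e1 : t*(2*k-1) + t*1 = t*((2*k-1)+1) := (Nat.mul_add t (2*k-1) 1).symm
    rw [show (2*k-1)+1 = 2*k by omega] at e1
    have e3 : t*(2*k) = 2*k*t := Nat.mul_comm t (2*k)
    omega
  have key : ∀ (r : ℕ), r < 2*k*t - t + 1 → ∀ (T : Finset ℕ),
      (∀ c, c < 2*k*t → ((r = c/(2*k)*(2*k-1) + c%(2*k)
          ∨ (c%(2*k) < 2*k-1 ∧ r = c/(2*k)*(2*k-1)+c%(2*k)+1)) ↔ c ∈ T)) →
      (∀ c ∈ T, c < 2*k*t) → ∑ c ∈ T, Z c = 0 := by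
    intro r hr T hchar hTsub
    have h := hrow r hr
    have h2 : ∀ c ∈ Finset.range (2*k*t),
        (if (r = c/(2*k)*(2*k-1) + c%(2*k)
            ∨ (c%(2*k) < 2*k-1 ∧ r = c/(2*k)*(2*k-1)+c%(2*k)+1)) then Z c else 0)
        = (if c ∈ T then Z c else 0) := by
      intro c hc
      rw [Finset.mem_range] at hc
      exact if_congr (hchar c hc) rfl rfl
    rw [Finset.sum_congr rfl h2, Finset.sum_ite_mem] at h
    rwa [Finset.inter_eq_right.mpr (fun c hc => Finset.mem_range.mpr (hTsub c hc))] at h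
  -- characterizations
  have charZ : ∀ c, c < 2*k*t →
      ((0 = c/(2*k)*(2*k-1) + c%(2*k)
        ∨ (c%(2*k) < 2*k-1 ∧ 0 = c/(2*k)*(2*k-1)+c%(2*k)+1)) ↔ c ∈ ({0} : Finset ℕ)) := by
    intro c hc
    have hdm := Nat.div_add_mod c (2*k)
    rw [Finset.mem_singleton]
    constructor
    · rintro (h | ⟨h1, h2⟩)
      · have hq : c/(2*k)*(2*k-1) = 0 := by omega
        have hq0 : c/(2*k) = 0 := by
          rcases Nat.mul_eq_zero.mp hq with h' | h'
          · exact h'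
          · omega
        rw [hq0, Nat.mul_zero] at hdm
        omega
      · omega
    · rintro rfl
      left
      simp
  have charI : ∀ b, b < t → ∀ j, 1 ≤ j → j < 2*k-1 → ∀ c, c < 2*k*t →
      ((b*(2*k-1)+j = c/(2*k)*(2*k-1) + c%(2*k)
        ∨ (c%(2*k) < 2*k-1 ∧ b*(2*k-1)+j = c/(2*k)*(2*k-1)+c%(2*k)+1))
       ↔ c ∈ ({2*k*b+j, 2*k*b+(j-1)} : Finset ℕ)) := by
    intro b hb j hj1 hj2 c hc
    have hdm := Nat.div_add_mod c (2*k)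
    have hs : c % (2*k) < 2*k := Nat.mod_lt _ (by omega)
    rw [Finset.mem_insert, Finset.mem_singleton]
    constructor
    · rintro (h | ⟨h1, h2⟩)
      · rcases diagSolve (by omega : c%(2*k) ≤ 2*k-1) hj2 h.symm with ⟨e1, e2⟩ | ⟨e1, e2, e3⟩
        · left; rw [← hdm, e1, e2]
        · omega
      · have h' : c/(2*k)*(2*k-1) + (c%(2*k)+1) = b*(2*k-1)+j := by omega
        rcases diagSolve (by omega : c%(2*k)+1 ≤ 2*k-1) hj2 h' with ⟨e1, e2⟩ | ⟨e1, e2, e3⟩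
        · right
          have e2' : c % (2*k) = j - 1 := by omega
          rw [← hdm, e1, e2']
        · omega
    · rintro (rfl | rfl)
      · obtain ⟨d1, d2⟩ := divmod (q := b) (by omega : (0:ℕ) < 2*k) (by omega : j < 2*k)
        left; rw [d1, d2]
      · obtain ⟨d1, d2⟩ := divmod (q := b) (by omega : (0:ℕ) < 2*k) (by omega : j-1 < 2*k)
        right
        refine ⟨?_, ?_⟩
        · rw [d2]; omega
        · rw [d1, d2]; omega
  have char0 : ∀ b, b+1 ≤ t → ∀ c, c < 2*k*t →
      (((b+1)*(2*k-1) = c/(2*k)*(2*k-1) + c%(2*k)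
        ∨ (c%(2*k) < 2*k-1 ∧ (b+1)*(2*k-1) = c/(2*k)*(2*k-1)+c%(2*k)+1))
       ↔ ((c = 2*k*(b+1) ∧ b+1 < t) ∨ c = 2*k*b+(2*k-1) ∨ c = 2*k*b+(2*k-2))) := by
    intro b hb c hc
    have hdm := Nat.div_add_mod c (2*k)
    have hs : c % (2*k) < 2*k := Nat.mod_lt _ (by omega)
    constructor
    · rintro (h | ⟨h1, h2⟩)
      · have h' : c/(2*k)*(2*k-1) + c%(2*k) = (b+1)*(2*k-1) + 0 := by omega
        rcases diagSolve (by omega) (by omega : 0 < 2*k-1) h' with ⟨e1, e2⟩ | ⟨e1, e2, _⟩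
        · left
          have hc' : c = 2*k*(b+1) := by rw [← hdm, e1, e2]; omega
          refine ⟨hc', ?_⟩
          by_contra hbt
          have hbt' : b+1 = t := by omega
          rw [hbt'] at hc'
          omega
        · right; left
          have e1' : c/(2*k) = b := by omega
          rw [← hdm, e1', e2]
      · have h' : c/(2*k)*(2*k-1) + (c%(2*k)+1) = (b+1)*(2*k-1) + 0 := by omega
        rcases diagSolve (by omega) (by omega : 0 < 2*k-1) h' with ⟨e1, e2⟩ | ⟨e1, e2, _⟩
        · omega
        · right; right
          have e1' : c/(2*k) = b := by omega
          have e2' : c%(2*k) = 2*k-2 := by omega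
          rw [← hdm, e1', e2']
    · have elink : (b+1)*(2*k-1) = b*(2*k-1)+(2*k-1) := by rw [add_mul, one_mul]
      rintro (⟨rfl, hbt⟩ | rfl | rfl)
      · obtain ⟨d1, d2⟩ := divmod (m := 2*k) (q := b+1) (s := 0) (by omega) (by omega)
        rw [Nat.add_zero] at d1 d2
        left
        rw [d1, d2]
        omega
      · obtain ⟨d1, d2⟩ := divmod (m := 2*k) (q := b) (s := 2*k-1) (by omega) (by omega)
        left
        rw [d1, d2]
        omega
      · obtain ⟨d1, d2⟩ := divmod (m := 2*k) (q := b) (s := 2*k-2) (by omega) (by omega)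
        right
        refine ⟨?_, ?_⟩
        · rw [d2]; omega
        · rw [d1, d2]; omega
  -- the four equation families
  have hE0 : Z 0 = 0 := by
    have h := key 0 (by omega) {0} charZ
      (by intro c hc; rw [Finset.mem_singleton] at hc; omega)
    simpa using h
  have hE1 : ∀ b, b < t → ∀ j, 1 ≤ j → j < 2*k-1 →
      Z (2*k*b+j) + Z (2*k*b+(j-1)) = 0 := by
    intro b hb j h1 h2
    have hr : b*(2*k-1)+j ≤ t*(2*k-1) := by
      have e : (b+1)*(2*k-1) = b*(2*k-1)+(2*k-1) := by rw [add_mul, one_mul]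
      have e2 : (b+1)*(2*k-1) ≤ t*(2*k-1) := Nat.mul_le_mul_right _ hb
      omega
    have h := key (b*(2*k-1)+j) (hrowBound _ hr) {2*k*b+j, 2*k*b+(j-1)}
      (charI b hb j h1 h2)
      (by intro c hc
          rw [Finset.mem_insert, Finset.mem_singleton] at hc
          rcases hc with rfl | rfl
          · exact blt hb (by omega)
          · exact blt hb (by omega))
    rwa [Finset.sum_pair (by omega : 2*k*b+j ≠ 2*k*b+(j-1))] at h
  have hE2 : ∀ b, b+1 < t →
      Z (2*k*(b+1)) + Z (2*k*b+(2*k-1)) + Z (2*k*b+(2*k-2)) = 0 := by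
    intro b hb
    have hlink : 2*k*(b+1) = 2*k*b + 2*k := by ring
    have hr : (b+1)*(2*k-1) ≤ t*(2*k-1) := Nat.mul_le_mul_right _ (by omega)
    have h := key ((b+1)*(2*k-1)) (hrowBound _ hr)
      {2*k*(b+1), 2*k*b+(2*k-1), 2*k*b+(2*k-2)}
      (by intro c hc
          rw [Finset.mem_insert, Finset.mem_insert, Finset.mem_singleton]
          rw [char0 b (by omega) c hc]
          constructor
          · rintro (⟨rfl, _⟩ | h | h) <;> tauto
          · rintro (rfl | h | h)
            · exact Or.inl ⟨rfl, hb⟩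
            · tauto
            · tauto)
      (by intro c hc
          simp only [Finset.mem_insert, Finset.mem_singleton] at hc
          rcases hc with rfl | rfl | rfl
          · have := blt hb (show (0:ℕ) < 2*k by omega); omega
          · exact blt (by omega) (by omega)
          · exact blt (by omega) (by omega))
    rw [Finset.sum_insert (by
          simp only [Finset.mem_insert, Finset.mem_singleton]
          push_neg
          omega),
        Finset.sum_pair (by omega)] at h
    linarith
  have hE3 : ∀ b, b+1 = t → Z (2*k*b+(2*k-1)) + Z (2*k*b+(2*k-2)) = 0 := by
    intro b hb
    have hr : (b+1)*(2*k-1) ≤ t*(2*k-1) := by rw [hb]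
    have h := key ((b+1)*(2*k-1)) (hrowBound _ hr) {2*k*b+(2*k-1), 2*k*b+(2*k-2)}
      (by intro c hc
          rw [Finset.mem_insert, Finset.mem_singleton]
          rw [char0 b (by omega) c hc]
          constructor
          · rintro (⟨_, h'⟩ | h | h)
            · omega
            · tauto
            · tauto
          · tauto)
      (by intro c hc
          simp only [Finset.mem_insert, Finset.mem_singleton] at hc
          rcases hc with rfl | rfl
          · exact blt (by omega) (by omega)
          · exact blt (by omega) (by omega))
    rwa [Finset.sum_pair (by omega)] at h
  -- propagation within a block
  have hA' : ∀ b, b < t → ∀ j, j < 2*k-1 → (Z (2*k*b+j) = 0 ↔ Z (2*k*b) = 0) := by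
    intro b hb j
    induction j with
    | zero => intro _; norm_num
    | succ i ih =>
      intro hj
      have e := hE1 b hb (i+1) (by omega) hj
      rw [show i+1-1 = i from rfl] at e
      have ih' := ih (by omega)
      constructor
      · intro h; rw [← ih']; linarith
      · intro h
        have hi : Z (2*k*b+i) = 0 := ih'.mpr h
        linarith
  -- there is a nonzero block
  have hex : ∃ b, b < t ∧ (Z (2*k*b) ≠ 0 ∨ Z (2*k*b+(2*k-1)) ≠ 0) := by
    obtain ⟨c0, hc0⟩ := Function.ne_iff.mp hz
    have hc0' : z c0 ≠ 0 := by simpa using hc0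
    have hzc : Z c0.val ≠ 0 := by rw [hZz]; exact hc0'
    have hdm := Nat.div_add_mod c0.val (2*k)
    have hlt : c0.val < 2*k*t := c0.isLt
    have hbt : c0.val/(2*k) < t := by
      rcases Nat.lt_or_ge (c0.val/(2*k)) t with h | h
      · exact h
      · exfalso
        have := Nat.mul_le_mul_left (2*k) h
        omega
    refine ⟨c0.val/(2*k), hbt, ?_⟩
    have hs : c0.val % (2*k) < 2*k := Nat.mod_lt _ (by omega)
    rcases Nat.lt_or_ge (c0.val % (2*k)) (2*k-1) with h | h
    · left
      intro hcontra
      apply hzc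
      rw [← show 2*k*(c0.val/(2*k)) + c0.val % (2*k) = c0.val from hdm]
      exact (hA' _ hbt _ h).mpr hcontra
    · right
      rw [show 2*k*(c0.val/(2*k)) + (2*k-1) = c0.val from by omega]
      exact hzc
  obtain ⟨q0, hq0spec, hq0min⟩ :
      ∃ q0, (q0 < t ∧ (Z (2*k*q0) ≠ 0 ∨ Z (2*k*q0+(2*k-1)) ≠ 0)) ∧
        ∀ m, m < q0 → ¬(m < t ∧ (Z (2*k*m) ≠ 0 ∨ Z (2*k*m+(2*k-1)) ≠ 0)) :=
    ⟨Nat.find hex, Nat.find_spec hex, fun m hm => Nat.find_min hex hm⟩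
  have hzero : ∀ b, b < q0 → ∀ j, j < 2*k → Z (2*k*b+j) = 0 := by
    intro b hbq j hj
    have hb : b < t := lt_trans hbq hq0spec.1
    have hnb := hq0min b hbq
    push_neg at hnb
    obtain ⟨h1, h2⟩ := hnb hb
    rcases Nat.lt_or_ge j (2*k-1) with h | h
    · rw [hA' b hb j h]; exact h1
    · rw [show j = 2*k-1 by omega]
      exact h2
  have hq0z : Z (2*k*q0) = 0 := by
    rcases Nat.eq_zero_or_pos q0 with h | h
    · rw [h]; simpa using hE0
    · obtain ⟨b, rfl⟩ : ∃ b, q0 = b+1 := ⟨q0-1, by omega⟩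
      have e := hE2 b hq0spec.1
      have z1 := hzero b (by omega) (2*k-1) (by omega)
      have z2 := hzero b (by omega) (2*k-2) (by omega)
      linarith
  have hq0top : Z (2*k*q0+(2*k-1)) ≠ 0 := by
    rcases hq0spec.2 with h | h
    · exact (h hq0z).elim
    · exact h
  have hmid : ∀ j, j < 2*k-1 → Z (2*k*q0+j) = 0 :=
    fun j hj => (hA' q0 hq0spec.1 j hj).mpr hq0z
  have hq0t1 : q0+1 < t := by
    by_contra h
    have hq0eq : q0+1 = t := by omega
    have e := hE3 q0 hq0eq
    have hm2 := hmid (2*k-2) (by omega)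
    apply hq0top
    linarith
  have hnext0 : Z (2*k*(q0+1)) ≠ 0 := by
    have e := hE2 q0 hq0t1
    have hm2 := hmid (2*k-2) (by omega)
    intro h
    apply hq0top
    linarith
  have hnextall : ∀ j, j < 2*k-1 → Z (2*k*(q0+1)+j) ≠ 0 := by
    intro j hj h
    exact hnext0 ((hA' (q0+1) hq0t1 j hj).mp h)
  have hlink : 2*k*(q0+1) = 2*k*q0 + 2*k := by ring
  -- extra nonzero entry beyond the 2k found so far
  have hextra : ∃ e, (2*k*(q0+1)+(2*k-1) ≤ e) ∧ e < 2*k*t ∧ Z e ≠ 0 := by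
    by_cases h : Z (2*k*(q0+1)+(2*k-1)) = 0
    · have h2t : q0+2 < t := by
        by_contra h'
        have ht' : (q0+1)+1 = t := by omega
        have e := hE3 (q0+1) ht'
        apply hnextall (2*k-2) (by omega)
        linarith
      refine ⟨2*k*(q0+2), ?_, ?_, ?_⟩
      · have e : 2*k*(q0+2) = 2*k*(q0+1) + 2*k := by ring
        omega
      · have := blt h2t (show (0:ℕ) < 2*k by omega); omega
      · have e := hE2 (q0+1) h2t
        intro h'
        apply hnextall (2*k-2) (by omega)
        linarith
    · exact ⟨_, le_refl _, blt hq0t1 (by omega), h⟩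
  obtain ⟨e, hee, heN, hez⟩ := hextra
  -- the witness finset
  set T0 : Finset ℕ :=
    insert e ((Finset.range (2*k)).image (fun j => 2*k*q0 + (2*k-1) + j)) with hT0
  have hnm : e ∉ (Finset.range (2*k)).image (fun j => 2*k*q0 + (2*k-1) + j) := by
    simp only [Finset.mem_image, Finset.mem_range]
    rintro ⟨j, hj, hje⟩
    omega
  have hT0card : T0.card = 2*k+1 := by
    rw [hT0, Finset.card_insert_of_notMem hnm,
      Finset.card_image_of_injective _ (add_right_injective _), Finset.card_range]
  have hT0N : ∀ c ∈ T0, c < 2*k*t := by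
    intro c hc
    rw [hT0] at hc
    simp only [Finset.mem_insert, Finset.mem_image, Finset.mem_range] at hc
    rcases hc with rfl | ⟨j, hj, rfl⟩
    · exact heN
    · omega
  have hT0Z : ∀ c ∈ T0, Z c ≠ 0 := by
    intro c hc
    rw [hT0] at hc
    simp only [Finset.mem_insert, Finset.mem_image, Finset.mem_range] at hc
    rcases hc with rfl | ⟨j, hj, rfl⟩
    · exact hez
    · rcases Nat.eq_zero_or_pos j with rfl | hj1
      · rw [Nat.add_zero]; exact hq0top
      · rw [show 2*k*q0+(2*k-1)+j = 2*k*(q0+1)+(j-1) by omega]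
        exact hnextall (j-1) (by omega)
  set T : Finset (Fin (2*k*t)) := T0.attachFin hT0N with hT
  have hsub : (↑T : Set (Fin (2*k*t))) ⊆ {j | z j ≠ 0} := by
    intro x hx
    have hx' : x.val ∈ T0 := by
      have hmem := Finset.mem_coe.mp hx
      rw [hT] at hmem
      exact (Finset.mem_attachFin hT0N).mp hmem
    have hzx := hT0Z _ hx'
    simp only [Set.mem_setOf_eq]
    rw [← hZz]
    exact hzx
  calc (2*k+1 : ℕ) = T.card := by rw [hT, Finset.card_attachFin, hT0card]
    _ = (↑T : Set (Fin (2*k*t))).ncard := (Set.ncard_coe_finset T).symm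
    _ ≤ {j | z j ≠ 0}.ncard := Set.ncard_le_ncard hsub (Set.toFinite _)
end

section
/- On a cycle graph with n nodes where each measurement must be a sum over a set of consecutive nodes, any set of measurements that can distinguish all vectors with at most 2 nonzero entries must contain at least n measurements. More precisely: if a 0-1 measurement matrix A (rows supported on cyclic intervals) identifies all 2-sparse vectors, then every node must be an endpoint of a measurement interval at least twice, hence the number of measurements is at least n. -/
/-- Group testing on a cycle of `n` nodes where each measurement is a cyclic
interval: any collection of measurements distinguishing all vectors with at most
two nonzero (true) entries must contain at least `n` measurements. -/
theorem stmt_5 (n m : ℕ) (hn : 3 ≤ n)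
    (a l : Fin m → ℕ) (hl : ∀ i, 1 ≤ l i ∧ l i ≤ n)
    (meas : Fin m → Fin n → Prop)
    (hmeas : ∀ i j, meas i j ↔ ∃ s < l i, j.val = (a i + s) % n)
    (hid : ∀ x₁ x₂ : Fin n → Bool,
      {j | x₁ j = true}.ncard ≤ 2 → {j | x₂ j = true}.ncard ≤ 2 →
      (∀ i, (∃ j, meas i j ∧ x₁ j = true) ↔ (∃ j, meas i j ∧ x₂ j = true)) →
      x₁ = x₂) :
    n ≤ m := by
  have hn0 : 0 < n := by omega
  -- cyclic successor
  let succ : Fin n → Fin n := fun u => ⟨(u.val + 1) % n, Nat.mod_lt _ hn0⟩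
  have hsuccne : ∀ u : Fin n, succ u ≠ u := by
    intro u h
    have h2 : (u.val + 1) % n = u.val := by simpa [succ] using congrArg Fin.val h
    have hu := u.isLt
    rcases Nat.lt_or_ge (u.val + 1) n with h1 | h1
    · rw [Nat.mod_eq_of_lt h1] at h2; omega
    · have he : u.val + 1 = n := by omega
      rw [he, Nat.mod_self] at h2; omega
  -- Step 1: every node is a right endpoint of some measurement
  have key : ∀ u : Fin n, ∃ i, meas i u ∧ ¬ meas i (succ u) := by
    intro u
    by_contra hcon
    push_neg at hcon
    -- every measurement containing u contains succ u
    set v := succ u with hv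
    have hne : v ≠ u := hsuccne u
    have := hid (fun j => decide (j = v)) (fun j => decide (j = u ∨ j = v)) ?_ ?_ ?_
    · have := congrFun this u
      simp [hne.symm] at this
    · have : {j : Fin n | decide (j = v) = true} = {v} := by
        ext j; simp
      rw [this, Set.ncard_singleton]; omega
    · have : {j : Fin n | decide (j = u ∨ j = v) = true} = insert u {v} := by
        ext j; simp
      rw [this]
      calc (insert u {v} : Set (Fin n)).ncard ≤ ({v} : Set (Fin n)).ncard + 1 :=
            Set.ncard_insert_le _ _
        _ ≤ 2 := by rw [Set.ncard_singleton]
    · intro i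
      constructor
      · rintro ⟨j, hj, hjv⟩
        simp only [decide_eq_true_eq] at hjv
        exact ⟨j, hj, by simp [hjv]⟩
      · rintro ⟨j, hj, hjuv⟩
        simp only [decide_eq_true_eq] at hjuv
        rcases hjuv with rfl | rfl
        · exact ⟨v, hcon i hj, by simp⟩
        · exact ⟨v, hj, by simp⟩
  -- Step 2: the right endpoint determines the node from the measurement
  have uniq : ∀ (i : Fin m) (u : Fin n), meas i u → ¬ meas i (succ u) →
      u.val = (a i + (l i - 1)) % n := by
    intro i u hu hnu
    rw [hmeas] at hu
    obtain ⟨s, hs, hus⟩ := hu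
    have hli := (hl i).1
    -- claim s = l i - 1
    by_cases h : s = l i - 1
    · rw [← h]; exact hus
    · exfalso
      apply hnu
      rw [hmeas]
      refine ⟨s + 1, by omega, ?_⟩
      show (u.val + 1) % n = (a i + (s + 1)) % n
      rw [hus, ← Nat.add_assoc]
      exact Nat.mod_add_mod _ _ _
  -- build the injection
  choose f hf1 hf2 using key
  have hinj : Function.Injective f := by
    intro u u' h
    have h1 := uniq (f u) u (hf1 u) (hf2 u)
    have h2 := uniq (f u') u' (hf1 u') (hf2 u')
    rw [h] at h1
    exact Fin.ext (h1.trans h2.symm)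
  calc n = Fintype.card (Fin n) := (Fintype.card_fin n).symm
    _ ≤ Fintype.card (Fin m) := Fintype.card_le_of_injective f hinj
    _ = m := Fintype.card_fin m
end

section
/- Let G be a graph with n nodes admitting an r-partition N₁, …, N_r (disjoint sets covering V such that for each i, V ∖ N_i is a hub for N_i). If for each i there exists a measurement scheme with M_i measurements identifying all k-sparse vectors on N_i (treating N_i as a complete graph), then there exists a feasible measurement scheme on G, with each measurement supported on a connected induced subgraph, using at most Σᵢ Mᵢ + r measurements that identifies all k-sparse vectors associated with G. -/
lemma induce_union_connected {V : Type*} (G : SimpleGraph V) (s t : Set V)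
    (hs : (G.induce s).Connected)
    (ht : ∀ v ∈ t, ∃ w ∈ s, G.Adj v w) : (G.induce (s ∪ t)).Connected := by
  obtain ⟨v₀, hv₀⟩ := hs.nonempty
  have key : ∀ a : ↑(s ∪ t), ∃ b : ↑(s ∪ t), (b : V) ∈ s ∧ (G.induce (s ∪ t)).Reachable a b := by
    rintro ⟨a, ha⟩
    by_cases has : a ∈ s
    · exact ⟨⟨a, Or.inl has⟩, has, SimpleGraph.Reachable.refl _⟩
    · obtain ⟨w, hws, hadj⟩ := ht a (ha.resolve_left has)
      exact ⟨⟨w, Or.inl hws⟩, hws, SimpleGraph.Adj.reachable (by simpa using hadj)⟩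
  have smap : ∀ a b : ↑(s ∪ t), (a : V) ∈ s → (b : V) ∈ s →
      (G.induce (s ∪ t)).Reachable a b := by
    rintro ⟨a, ha⟩ ⟨b, hb⟩ has hbs
    have := hs.preconnected ⟨a, has⟩ ⟨b, hbs⟩
    have := this.map (G.induceHomOfLE (Set.subset_union_left (t := t))).toHom
    exact this
  rw [SimpleGraph.connected_iff]
  refine ⟨?_, ⟨⟨v₀, Or.inl hv₀⟩⟩⟩
  rintro ⟨a, ha⟩ ⟨b, hb⟩
  obtain ⟨a', ha's, haa'⟩ := key ⟨a, ha⟩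
  obtain ⟨b', hb's, hbb'⟩ := key ⟨b, hb⟩
  exact (haa'.trans (smap a' b' ha's hb's)).trans hbb'.symm



/-- Measurement construction from an `r`-partition: if `N₁, …, N_r` partition the
vertices of `G` and each complement `V ∖ Nᵢ` is a hub for `Nᵢ`, and each `Nᵢ`
admits a 0-1 measurement matrix with `Mᵢ` rows identifying `k`-sparse vectors,
then `G` admits a feasible (connected-support) 0-1 measurement scheme with at
most `Σᵢ Mᵢ + r` measurements identifying all `k`-sparse vectors on `G`. -/
theorem stmt_7 {V : Type*} [Fintype V] [DecidableEq V] (G : SimpleGraph V)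
    (k r : ℕ) (N : Fin r → Finset V)
    (hdisj : ∀ i j, i ≠ j → Disjoint (N i) (N j))
    (hcover : ∀ v : V, ∃ i, v ∈ N i)
    (hhub : ∀ i, (G.induce ((↑(N i) : Set V)ᶜ)).Connected ∧
      ∀ u ∈ N i, ∃ s : V, s ∉ N i ∧ G.Adj u s)
    (M : Fin r → ℕ)
    (B : ∀ i, Matrix (Fin (M i)) (N i) ℝ)
    (hB01 : ∀ i a b, B i a b = 0 ∨ B i a b = 1)
    (hBid : ∀ i, ∀ x₁ x₂ : (N i) → ℝ,
      {j | x₁ j ≠ 0}.ncard ≤ k → {j | x₂ j ≠ 0}.ncard ≤ k →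
      (B i).mulVec x₁ = (B i).mulVec x₂ → x₁ = x₂) :
    ∃ m, m ≤ (∑ i, M i) + r ∧ ∃ A : Matrix (Fin m) V ℝ,
      (∀ a j, A a j = 0 ∨ A a j = 1) ∧
      (∀ a, (G.induce {j | A a j = 1}).Connected) ∧
      (∀ x₁ x₂ : V → ℝ, {j | x₁ j ≠ 0}.ncard ≤ k → {j | x₂ j ≠ 0}.ncard ≤ k →
        A.mulVec x₁ = A.mulVec x₂ → x₁ = x₂) := by
  classical
  set m : ℕ := (∑ i, M i) + r with hm
  have hcard : Fintype.card ((Σ i : Fin r, Fin (M i)) ⊕ Fin r) = m := by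
    simp [Fintype.card_sigma, hm]
  let e : ((Σ i : Fin r, Fin (M i)) ⊕ Fin r) ≃ Fin m := Fintype.equivFinOfCardEq hcard
  set A' : Matrix ((Σ i : Fin r, Fin (M i)) ⊕ Fin r) V ℝ := fun x j =>
    match x with
    | Sum.inl ⟨i, a⟩ => if h : j ∈ N i then B i a ⟨j, h⟩ else 1
    | Sum.inr i => if j ∈ N i then 0 else 1
    with hA'
  set A : Matrix (Fin m) V ℝ := fun p j => A' (e.symm p) j with hA
  refine ⟨m, le_refl _, A, ?_, ?_, ?_⟩
  · -- 0/1 entries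
    intro a j
    show A' (e.symm a) j = 0 ∨ A' (e.symm a) j = 1
    rcases e.symm a with ⟨i, b⟩ | i
    · by_cases h : j ∈ N i
      · simpa [hA', h] using hB01 i b ⟨j, h⟩
      · simp [hA', h]
    · by_cases h : j ∈ N i <;> simp [hA', h]
  · -- connected supports
    intro a
    show (G.induce {j | A' (e.symm a) j = 1}).Connected
    rcases e.symm a with ⟨i, b⟩ | i
    · -- row from B i
      have hsub : ((↑(N i) : Set V)ᶜ) ⊆ {j | A' (Sum.inl ⟨i, b⟩) j = 1} := by
        intro j hj
        simp only [Set.mem_compl_iff, Finset.mem_coe] at hj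
        simp [hA', hj]
      have hset : {j | A' (Sum.inl ⟨i, b⟩) j = 1} =
          ((↑(N i) : Set V)ᶜ) ∪ ({j | A' (Sum.inl ⟨i, b⟩) j = 1} \ ((↑(N i) : Set V)ᶜ)) :=
        (Set.union_diff_cancel hsub).symm
      rw [hset]
      refine induce_union_connected G _ _ (hhub i).1 ?_
      rintro v ⟨-, hv⟩
      have hvN : v ∈ N i := by simpa using hv
      obtain ⟨s, hs, hadj⟩ := (hhub i).2 v hvN
      exact ⟨s, by simpa using hs, hadj⟩
    · -- hub row
      have hset : {j | A' (Sum.inr i) j = 1} = ((↑(N i) : Set V)ᶜ) := by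
        ext j
        by_cases h : j ∈ N i <;> simp [hA', h]
      rw [hset]
      exact (hhub i).1
  · -- identifiability
    intro x₁ x₂ hx₁ hx₂ hmul
    have hmul' : ∀ idx, A'.mulVec x₁ idx = A'.mulVec x₂ idx := by
      intro idx
      have := congrFun hmul (e idx)
      simpa [hA, Matrix.mulVec, dotProduct] using this
    funext v
    obtain ⟨i, hv⟩ := hcover v
    -- row computations
    have hrow : ∀ (x : V → ℝ) (a : Fin (M i)),
        A'.mulVec x (Sum.inl ⟨i, a⟩) =
          (B i).mulVec (fun j => x ↑j) a + ∑ j ∈ (N i)ᶜ, x j := by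
      intro x a
      simp only [Matrix.mulVec, dotProduct]
      rw [← Finset.sum_add_sum_compl (N i)]
      congr 1
      · rw [Finset.univ_eq_attach, ← Finset.sum_attach (N i)
          (fun j => A' (Sum.inl ⟨i, a⟩) j * x j)]
        refine Finset.sum_congr rfl ?_
        rintro ⟨j, hj⟩ -
        simp [hA', hj]
      · refine Finset.sum_congr rfl ?_
        intro j hj
        rw [Finset.mem_compl] at hj
        simp [hA', hj]
    have hhubrow : ∀ (x : V → ℝ),
        A'.mulVec x (Sum.inr i) = ∑ j ∈ (N i)ᶜ, x j := by
      intro x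
      simp only [Matrix.mulVec, dotProduct]
      rw [← Finset.sum_add_sum_compl (N i)]
      have h1 : ∑ j ∈ N i, A' (Sum.inr i) j * x j = 0 :=
        Finset.sum_eq_zero (fun j hj => by simp [hA', hj])
      rw [h1, zero_add]
      refine Finset.sum_congr rfl ?_
      intro j hj
      rw [Finset.mem_compl] at hj
      simp [hA', hj]
    have hhubeq : ∑ j ∈ (N i)ᶜ, x₁ j = ∑ j ∈ (N i)ᶜ, x₂ j := by
      have := hmul' (Sum.inr i); rwa [hhubrow, hhubrow] at this
    have hBeq : (B i).mulVec (fun j => x₁ ↑j) = (B i).mulVec (fun j => x₂ ↑j) := by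
      funext a
      have := hmul' (Sum.inl ⟨i, a⟩)
      rw [hrow, hrow, hhubeq] at this
      linarith
    have hsparse : ∀ (x : V → ℝ), {j | x j ≠ 0}.ncard ≤ k →
        {j : (N i) | x ↑j ≠ 0}.ncard ≤ k := by
      intro x hx
      calc {j : (N i) | x ↑j ≠ 0}.ncard
          = ((Subtype.val : (N i) → V) '' {j : (N i) | x ↑j ≠ 0}).ncard :=
            (Set.ncard_image_of_injective _ Subtype.val_injective).symm
        _ ≤ {j | x j ≠ 0}.ncard := Set.ncard_le_ncard
            (by rintro _ ⟨j, hj, rfl⟩; exact hj) (Set.toFinite _)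
        _ ≤ k := hx
    have := hBid i _ _ (hsparse x₁ hx₁) (hsparse x₂ hx₂) hBeq
    exact congrFun this ⟨v, hv⟩
end

section
/- Let Φ' be a random p × n matrix with i.i.d. entries taking values ±1/√p with equal probability. Construct Φ̂ from Φ' by negating row i (all entries in row i) exactly when Φ'_{i,n} = 1/√p. Then (i) Φ̂ has the same probability distribution as the matrix Φ whose last column is constantly −1/√p and whose other entries are i.i.d. ±1/√p; and (ii) for every column-index subset U, Φ'_U^T Φ'_U = Φ̂_U^T Φ̂_U, so Φ' and Φ̂ have identical restricted singular values: ‖Φ'_U x‖₂ = ‖Φ̂_U x‖₂ for all x. -/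
open MeasureTheory in
/-- Row-flipping lemma: let `Φ'` be the i.i.d. `±1/√p` matrix built from uniform
random signs `ω`, and let `Φ̂` negate every row whose entry in the last column is
`+1/√p`. Then (i) `Φ̂` has the same distribution as the matrix `Φ` whose last
column is constantly `-1/√p` and whose other entries are i.i.d. `±1/√p`; and
(ii) pointwise, `Φ'` and `Φ̂` have identical column Gram matrices and restricted
norms. -/
theorem stmt_9 (p n : ℕ) (hp : 0 < p) (hn : 0 < n)
    (μ : Measure (Fin p → Fin n → Bool))
    (hμ : μ = (PMF.uniformOfFintype (Fin p → Fin n → Bool)).toMeasure)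
    (last : Fin n) (hlast : last.val = n - 1)
    (Φ' Φhat Φ : (Fin p → Fin n → Bool) → Fin p → Fin n → ℝ)
    (hΦ' : ∀ ω i j, Φ' ω i j = if ω i j then 1 / Real.sqrt p else -1 / Real.sqrt p)
    (hΦhat : ∀ ω i j, Φhat ω i j = if ω i last then -(Φ' ω i j) else Φ' ω i j)
    (hΦ : ∀ ω i j, Φ ω i j = if j = last then -1 / Real.sqrt p
      else if ω i j then 1 / Real.sqrt p else -1 / Real.sqrt p) :
    μ.map Φhat = μ.map Φ ∧
    ∀ ω, ∀ U : Finset (Fin n),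
      (∀ j₁ ∈ U, ∀ j₂ ∈ U,
        ∑ i, Φ' ω i j₁ * Φ' ω i j₂ = ∑ i, Φhat ω i j₁ * Φhat ω i j₂) ∧
      ∀ x : Fin n → ℝ,
        ∑ i, (∑ j ∈ U, Φ' ω i j * x j) ^ 2 = ∑ i, (∑ j ∈ U, Φhat ω i j * x j) ^ 2 := by
  classical
  constructor
  · -- distribution part
    set f : (Fin p → Fin n → Bool) → (Fin p → Fin n → Bool) :=
      fun ω i j => if j = last then ω i last else xor (ω i j) (ω i last) with hf
    have hinv : Function.Involutive f := by
      intro ω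
      funext i j
      by_cases hj : j = last
      · simp [hf, hj]
      · simp only [hf, hj, if_false]
        cases ω i j <;> cases ω i last <;> simp
    have hmf : Measurable f := measurable_of_countable f
    have hcomp : Φhat = Φ ∘ f := by
      funext ω
      funext i j
      simp only [Function.comp_apply]
      by_cases hj : j = last
      · subst hj
        rw [hΦhat, hΦ]
        simp [hΦ', neg_div]
        cases ω i j <;> simp [neg_div]
      · rw [hΦhat, hΦ]
        simp only [hj, if_false, hΦ', hf]
        cases hl : ω i last <;> cases hjj : ω i j <;> simp [hl, hjj, neg_div]
    have hmapf : μ.map f = μ := by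
      rw [hμ]
      ext s hs
      rw [Measure.map_apply hmf hs,
        PMF.toMeasure_uniformOfFintype_apply _ (hmf hs),
        PMF.toMeasure_uniformOfFintype_apply _ hs]
      congr 1
      have e2 : (f ⁻¹' s) ≃ s :=
        { toFun := fun x => ⟨f x.1, x.2⟩
          invFun := fun y => ⟨f y.1, by
            simp only [Set.mem_preimage, hinv y.1]
            exact y.2⟩
          left_inv := fun x => Subtype.ext (hinv x.1)
          right_inv := fun y => Subtype.ext (hinv y.1) }
      exact_mod_cast Fintype.card_congr e2
    calc μ.map Φhat = (μ.map f).map Φ := by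
          rw [hcomp, Measure.map_map (measurable_of_countable Φ) hmf]
      _ = μ.map Φ := by rw [hmapf]
  · -- pointwise part
    intro ω U
    constructor
    · intro j₁ _ j₂ _
      refine Finset.sum_congr rfl fun i _ => ?_
      rw [hΦhat, hΦhat]
      by_cases h : ω i last <;> simp [h] <;> ring
    · intro x
      refine Finset.sum_congr rfl fun i _ => ?_
      by_cases h : ω i last
      · have : ∑ j ∈ U, Φhat ω i j * x j = -∑ j ∈ U, Φ' ω i j * x j := by
          rw [← Finset.sum_neg_distrib]
          refine Finset.sum_congr rfl fun j _ => ?_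
          rw [hΦhat]
          simp [h]
        rw [this, neg_sq]
      · have : ∑ j ∈ U, Φhat ω i j * x j = ∑ j ∈ U, Φ' ω i j * x j := by
          refine Finset.sum_congr rfl fun j _ => ?_
          rw [hΦhat]
          simp [h]
        rw [this]
end

section
/- Let A be an m × n real matrix. A vector x with ‖x‖₀ ≤ k is the unique solution of min ‖z‖₁ subject to A z = A x for every k-sparse x if the following null space property holds: for every nonzero w with A w = 0 and every set T ⊆ {1,…,n} with |T| ≤ k, ‖w_T‖₁ < ‖w‖₁/2. -/
/-- The null space property implies exact `k`-sparse recovery by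
`ℓ₁`-minimization: every `k`-sparse `x` is the unique minimizer of `‖z‖₁`
subject to `A z = A x`. -/
theorem stmt_11 (m n k : ℕ) (A : Matrix (Fin m) (Fin n) ℝ)
    (hNSP : ∀ w : Fin n → ℝ, w ≠ 0 → A.mulVec w = 0 →
      ∀ T : Finset (Fin n), T.card ≤ k → ∑ j ∈ T, |w j| < (∑ j, |w j|) / 2) :
    ∀ x : Fin n → ℝ, {j | x j ≠ 0}.ncard ≤ k →
      ∀ z : Fin n → ℝ, A.mulVec z = A.mulVec x → z ≠ x →
        ∑ j, |x j| < ∑ j, |z j| := by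
  intro x hx z hAz hzx
  set w : Fin n → ℝ := z - x with hw
  have hwne : w ≠ 0 := sub_ne_zero.mpr hzx
  have hAw : A.mulVec w = 0 := by
    simp [hw, Matrix.mulVec_sub, hAz]
  set T : Finset (Fin n) := Finset.univ.filter (fun j => x j ≠ 0) with hT
  have hTcard : T.card ≤ k := by
    have : {j | x j ≠ 0}.ncard = T.card := by
      rw [Set.ncard_eq_toFinset_card']
      congr 1
      ext j
      simp [hT]
    omega
  have hNS := hNSP w hwne hAw T hTcard
  have hsplit : ∀ f : Fin n → ℝ, ∑ j, f j = ∑ j ∈ T, f j + ∑ j ∈ Tᶜ, f j := by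
    intro f
    rw [← Finset.sum_add_sum_compl T f]
  have hcomp : (∑ j ∈ T, |w j|) < ∑ j ∈ Tᶜ, |w j| := by
    have h2 : ∑ j, |w j| = ∑ j ∈ T, |w j| + ∑ j ∈ Tᶜ, |w j| := hsplit _
    linarith
  have hxTc : ∀ j ∈ Tᶜ, x j = 0 := by
    intro j hj
    simpa [hT] using hj
  have h1 : ∑ j ∈ Tᶜ, |z j| = ∑ j ∈ Tᶜ, |w j| := by
    apply Finset.sum_congr rfl
    intro j hj
    simp [hw, hxTc j hj]
  have h2 : ∀ j ∈ T, |x j| - |w j| ≤ |z j| := by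
    intro j _
    have : |x j| - |z j| ≤ |x j - z j| := abs_sub_abs_le_abs_sub _ _
    have h3 : |x j - z j| = |w j| := by rw [hw]; simp [abs_sub_comm]
    linarith
  have h4 : ∑ j ∈ T, (|x j| - |w j|) ≤ ∑ j ∈ T, |z j| :=
    Finset.sum_le_sum h2
  rw [Finset.sum_sub_distrib] at h4
  have hxsum : ∑ j, |x j| = ∑ j ∈ T, |x j| := by
    rw [hsplit (fun j => |x j|)]
    have : ∑ j ∈ Tᶜ, |x j| = 0 := by
      apply Finset.sum_eq_zero
      intro j hj
      simp [hxTc j hj]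
    linarith
  rw [hsplit (fun j => |z j|), hxsum]
  linarith
end

section
/- Consider an m × (n+1) matrix P such that the sum of any k or fewer columns of P is nonzero (in particular, every k columns of P are linearly independent over sums with coefficients 1). If P is the oriented incidence structure of a graph G_eq on n+1 vertices (each row having one +1, one −1, rest 0), then every connected component of G_eq has at least k+1 vertices, and consequently m ≥ n+1 − ⌊(n+1)/(k+1)⌋. -/
open SimpleGraph

lemma reach_aux {V : Type*} {G : SimpleGraph V} {a b v w : V}
    (p : G.Walk v w) :
    (G \ fromEdgeSet {s(a,b)}).Reachable v w ∨
    ((G \ fromEdgeSet {s(a,b)}).Reachable v a ∧ (G \ fromEdgeSet {s(a,b)}).Reachable b w) ∨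
    ((G \ fromEdgeSet {s(a,b)}).Reachable v b ∧ (G \ fromEdgeSet {s(a,b)}).Reachable a w) := by
  set G' := G \ fromEdgeSet {s(a,b)} with hG'
  induction p with
  | nil => exact Or.inl (Reachable.refl _)
  | @cons u x y h p ih =>
    by_cases he : s(u, x) = s(a, b)
    · rw [Sym2.eq_iff] at he
      rcases he with ⟨rfl, rfl⟩ | ⟨rfl, rfl⟩
      · rcases ih with r | ⟨r1, r2⟩ | ⟨r1, r2⟩
        · exact Or.inr (Or.inl ⟨Reachable.refl _, r⟩)
        · exact Or.inl (r1.symm.trans r2)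
        · exact Or.inl r2
      · rcases ih with r | ⟨r1, r2⟩ | ⟨r1, r2⟩
        · exact Or.inr (Or.inr ⟨Reachable.refl _, r⟩)
        · exact Or.inl r2
        · exact Or.inl (r1.symm.trans r2)
    · have h' : G'.Adj u x := by
        rw [hG', sdiff_adj, fromEdgeSet_adj]
        exact ⟨h, fun hc => he (by simpa using hc.1)⟩
      rcases ih with r | ⟨r1, r2⟩ | ⟨r1, r2⟩
      · exact Or.inl (h'.reachable.trans r)
      · exact Or.inr (Or.inl ⟨h'.reachable.trans r1, r2⟩)
      · exact Or.inr (Or.inr ⟨h'.reachable.trans r1, r2⟩)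

open Classical in
lemma cc_card_le {V : Type*} [Finite V] (G : SimpleGraph V) (a b : V) :
    Nat.card (G \ fromEdgeSet {s(a,b)}).ConnectedComponent ≤
      Nat.card G.ConnectedComponent + 1 := by
  set G' := G \ fromEdgeSet {s(a,b)} with hG'
  have hle : G' ≤ G := sdiff_le
  let φ : G' →g G := Hom.ofLE hle
  let f : G'.ConnectedComponent → G.ConnectedComponent ⊕ Unit := fun c =>
    if c = G'.connectedComponentMk b then Sum.inr () else Sum.inl (c.map φ)
  have hf : Function.Injective f := by
    intro c1 c2 h
    obtain ⟨v, rfl⟩ := c1.exists_rep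
    obtain ⟨w, rfl⟩ := c2.exists_rep
    simp only [f] at h
    split_ifs at h with h1 h2 h2
    · rw [h1, h2]
    · have hr : G.Reachable v w := by
        have h' := h
        simp only [show (Quot.mk G'.Reachable v : G'.ConnectedComponent) =
          G'.connectedComponentMk v from rfl,
          show (Quot.mk G'.Reachable w : G'.ConnectedComponent) =
          G'.connectedComponentMk w from rfl, ConnectedComponent.map_mk, Sum.inl.injEq, φ,
          Hom.ofLE_apply] at h'
        exact ConnectedComponent.exact h'
      obtain ⟨p⟩ := hr
      rcases reach_aux (a := a) (b := b) p with r | ⟨r1, r2⟩ | ⟨r1, r2⟩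
      · exact ConnectedComponent.sound r
      · exact absurd (ConnectedComponent.sound r2.symm) h2
      · exact absurd (ConnectedComponent.sound r1) h1
  calc Nat.card G'.ConnectedComponent
      ≤ Nat.card (G.ConnectedComponent ⊕ Unit) := Nat.card_le_card_of_injective f hf
    _ = Nat.card G.ConnectedComponent + 1 := by simp [Nat.card_sum]

lemma card_le_card_edge_add_cc {V : Type*} [Finite V] (G : SimpleGraph V) :
    Nat.card V ≤ Nat.card G.edgeSet + Nat.card G.ConnectedComponent := by
  generalize hn : Nat.card G.edgeSet = n
  induction n using Nat.strong_induction_on generalizing G with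
  | _ n ih =>
  by_cases hE : G.edgeSet = ∅
  · have hbot : G = ⊥ := edgeSet_eq_empty.mp hE
    subst hbot
    have hinj : Function.Injective ((⊥ : SimpleGraph V).connectedComponentMk) := by
      intro v w h
      exact reachable_bot.mp (ConnectedComponent.exact h)
    have := Nat.card_le_card_of_injective _ hinj
    omega
  · obtain ⟨e, he⟩ := Set.nonempty_iff_ne_empty.mpr hE
    revert he
    induction e using Sym2.ind with
    | _ a b =>
    intro he
    set G' := G \ fromEdgeSet {s(a,b)} with hG'
    have hES : G'.edgeSet = G.edgeSet \ {s(a,b)} := by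
      rw [hG', edgeSet_sdiff, edgeSet_fromEdgeSet, edgeSet_sdiff_sdiff_isDiag]
    have hcard : Nat.card G'.edgeSet = n - 1 := by
      rw [Nat.card_coe_set_eq, hES, Set.ncard_diff_singleton_of_mem he,
        ← Nat.card_coe_set_eq, hn]
    have hn1 : 0 < n := by
      rw [← hn, Nat.card_coe_set_eq]
      exact (Set.ncard_pos (Set.toFinite _)).mpr ⟨_, he⟩
    have h1 := ih (n - 1) (by omega) G' hcard
    have h2 := cc_card_le G a b
    rw [← hG'] at h2
    omega

open Classical in
/-- If every row of `P` has exactly one `+1`, one `-1` and zeros elsewhere, the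
sum of any at most `k` columns of `P` is nonzero, and `G_eq` is the associated
incidence graph, then every connected component of `G_eq` has at least `k+1`
vertices, and consequently `m ≥ n + 1 - ⌊(n+1)/(k+1)⌋`. -/
theorem stmt_15 (m n k : ℕ) (P : Matrix (Fin m) (Fin (n + 1)) ℝ)
    (hrows : ∀ i, ∃ j k', j ≠ k' ∧ P i j = 1 ∧ P i k' = -1 ∧
      ∀ l, l ≠ j → l ≠ k' → P i l = 0)
    (hcols : ∀ S : Finset (Fin (n + 1)), S.Nonempty → S.card ≤ k →
      (∑ j ∈ S, fun i => P i j) ≠ (0 : Fin m → ℝ))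
    (Geq : SimpleGraph (Fin (n + 1)))
    (hGeq : ∀ a b, Geq.Adj a b ↔
      ∃ i, (P i a = 1 ∧ P i b = -1) ∨ (P i b = 1 ∧ P i a = -1)) :
    (∀ c : Geq.ConnectedComponent, k + 1 ≤ Nat.card c.supp) ∧
    n + 1 - (n + 1) / (k + 1) ≤ m := by
  classical
  set F : Geq.ConnectedComponent → Finset (Fin (n + 1)) :=
    fun c => Finset.univ.filter (fun v => Geq.connectedComponentMk v = c) with hF
  have hcardF : ∀ c : Geq.ConnectedComponent, Nat.card c.supp = (F c).card := by
    intro c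
    have hsuppS : (c.supp : Set (Fin (n + 1))) = ↑(F c) := by
      ext v; simp [F, ConnectedComponent.mem_supp_iff]
    rw [Nat.card_coe_set_eq, hsuppS, Set.ncard_coe_finset]
  have hS : ∀ c : Geq.ConnectedComponent, k + 1 ≤ (F c).card := by
    intro c
    obtain ⟨vrep, hvrep⟩ := c.exists_rep
    have hne : (F c).Nonempty := ⟨vrep, by simp [F]; exact hvrep⟩
    have hsum : (∑ j ∈ F c, fun i => P i j) = (0 : Fin m → ℝ) := by
      funext i
      simp only [Finset.sum_apply, Pi.zero_apply]
      obtain ⟨j, k', hjk, h1, h2, h0⟩ := hrows i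
      have hadj : Geq.Adj j k' := (hGeq j k').mpr ⟨i, Or.inl ⟨h1, h2⟩⟩
      have hcc : Geq.connectedComponentMk j = Geq.connectedComponentMk k' :=
        ConnectedComponent.sound hadj.reachable
      by_cases hjc : Geq.connectedComponentMk j = c
      · have hjS : j ∈ F c := by simp [F, hjc]
        have hkS : k' ∈ F c := by simp [F, ← hcc, hjc]
        rw [← Finset.add_sum_erase (F c) _ hjS]
        have hk'e : k' ∈ (F c).erase j :=
          Finset.mem_erase.mpr ⟨fun h => hjk h.symm, hkS⟩
        rw [← Finset.add_sum_erase _ _ hk'e]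
        have hz : ∀ v ∈ ((F c).erase j).erase k', P i v = 0 := by
          intro v hv
          rw [Finset.mem_erase, Finset.mem_erase] at hv
          exact h0 v hv.2.1 hv.1
        rw [Finset.sum_eq_zero hz, h1, h2]; ring
      · apply Finset.sum_eq_zero
        intro v hv
        have hvc : Geq.connectedComponentMk v = c := by simpa [F] using hv
        apply h0
        · rintro rfl; exact hjc hvc
        · rintro rfl; rw [← hcc] at hvc; exact hjc hvc
    by_contra hk
    push_neg at hk
    exact hcols (F c) hne (by omega) hsum
  have hsupp : ∀ c : Geq.ConnectedComponent, k + 1 ≤ Nat.card c.supp := by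
    intro c; rw [hcardF c]; exact hS c
  refine ⟨hsupp, ?_⟩
  have finCC : Fintype Geq.ConnectedComponent := Fintype.ofFinite _
  have hpart : (Finset.univ : Finset (Fin (n + 1))).card =
      ∑ c : Geq.ConnectedComponent, (F c).card :=
    Finset.card_eq_sum_card_fiberwise (fun v _ => Finset.mem_univ _)
  have hcount : Fintype.card Geq.ConnectedComponent * (k + 1) ≤ n + 1 := by
    have hle : ∑ _c : Geq.ConnectedComponent, (k + 1) ≤
        ∑ c : Geq.ConnectedComponent, (F c).card :=
      Finset.sum_le_sum (fun c _ => hS c)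
    rw [Finset.sum_const, smul_eq_mul, Finset.card_univ] at hle
    rw [← hpart] at hle
    simpa using hle
  have hccle : Nat.card Geq.ConnectedComponent ≤ (n + 1) / (k + 1) := by
    rw [Nat.card_eq_fintype_card, Nat.le_div_iff_mul_le (Nat.succ_pos k)]
    exact hcount
  have hedge : Nat.card Geq.edgeSet ≤ m := by
    have hsel : ∀ e : Geq.edgeSet, ∃ i : Fin m, ∃ j k' : Fin (n + 1),
        (e : Sym2 (Fin (n + 1))) = s(j, k') ∧ P i j = 1 ∧ P i k' = -1 ∧
        ∀ l, l ≠ j → l ≠ k' → P i l = 0 := by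
      intro e
      obtain ⟨e, he⟩ := e
      revert he
      induction e using Sym2.ind with
      | _ a b =>
      intro he
      rw [mem_edgeSet, hGeq] at he
      obtain ⟨i, hi⟩ := he
      obtain ⟨j, k', hjk, h1, h2, h0⟩ := hrows i
      have hone : ∀ x, P i x = 1 → x = j := by
        intro x hx
        by_contra hxj
        by_cases hxk : x = k'
        · rw [hxk, h2] at hx; norm_num at hx
        · rw [h0 x hxj hxk] at hx; norm_num at hx
      have hmone : ∀ x, P i x = -1 → x = k' := by
        intro x hx
        by_contra hxk
        by_cases hxj : x = j
        · rw [hxj, h1] at hx; norm_num at hx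
        · rw [h0 x hxj hxk] at hx; norm_num at hx
      rcases hi with ⟨ha, hb⟩ | ⟨hb, ha⟩
      · have heq : s(a, b) = s(j, k') := by rw [hone a ha, hmone b hb]
        exact ⟨i, j, k', heq, h1, h2, h0⟩
      · have heq : s(a, b) = s(j, k') := by
          rw [hone b hb, hmone a ha]; exact Sym2.eq_swap
        exact ⟨i, j, k', heq, h1, h2, h0⟩
    choose f jf kf heq h1 h2 h0 using hsel
    have hinj : Function.Injective f := by
      intro e1 e2 hfe
      have hj : jf e1 = jf e2 := by
        by_contra hne
        have h1' := h1 e1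
        rw [hfe] at h1'
        by_cases hk2 : jf e1 = kf e2
        · have := h2 e2
          rw [← hk2] at this
          rw [this] at h1'
          norm_num at h1'
        · have := h0 e2 (jf e1) hne hk2
          rw [this] at h1'
          norm_num at h1'
      have hk : kf e1 = kf e2 := by
        by_contra hne
        have h2' := h2 e1
        rw [hfe] at h2'
        by_cases hj2 : kf e1 = jf e2
        · have := h1 e2
          rw [← hj2] at this
          rw [this] at h2'
          norm_num at h2'
        · have := h0 e2 (kf e1) hj2 hne
          rw [this] at h2'
          norm_num at h2'
      apply Subtype.ext
      rw [heq e1, heq e2, hj, hk]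
    calc Nat.card Geq.edgeSet ≤ Nat.card (Fin m) := Nat.card_le_card_of_injective f hinj
      _ = m := by simp
  have hmain := card_le_card_edge_add_cc Geq
  have hV : Nat.card (Fin (n + 1)) = n + 1 := by simp
  rw [hV] at hmain
  omega
end

section
/- Let k ≥ 2 be even, t ≥ 2, and define B^k as the (k+1) × (k+1) 0-1 matrix with B_{ii} = 1 for all i, B_{1i} = 1 for all i, B_{i,i−1} = 1 for 2 ≤ i ≤ k+1, and zero elsewhere. Construct the (kt+1) × (k+1)t block matrix A by placing B^k on overlapping diagonal blocks: for i = 1,…,t, the submatrix of A with rows {(i−1)k+1, …, ik+1} and columns {(k+1)(i−1)+1, …, (k+1)i} equals B^k, all other entries zero. Then B^k is invertible, and every nonzero z ∈ ℝ^{(k+1)t} with A z = 0 has at least 2k+1 nonzero entries. -/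
open Finset

lemma enc_inj' {d q m q' m' : ℕ} (hm : m < d) (hm' : m' < d)
    (h : d * q + m = d * q' + m') : q = q' ∧ m = m' := by
  have hd : 0 < d := Nat.pos_of_ne_zero (by omega)
  have h1 : (d * q + m) / d = (d * q' + m') / d := by rw [h]
  rw [Nat.mul_add_div hd, Nat.mul_add_div hd, Nat.div_eq_of_lt hm, Nat.div_eq_of_lt hm'] at h1
  simp only [Nat.add_zero] at h1
  subst h1
  exact ⟨rfl, Nat.add_left_cancel h⟩

lemma sum_fin_mul' (d T : ℕ) (hd : 0 < d) (f : ℕ → ℝ) :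
    ∑ c : Fin (d * T), f c.val = ∑ q ∈ range T, ∑ m ∈ range d, f (d * q + m) := by
  rw [Fin.sum_univ_eq_sum_range, ← Finset.sum_product']
  refine Finset.sum_nbij' (fun n => (n / d, n % d)) (fun p => d * p.1 + p.2) ?_ ?_ ?_ ?_ ?_
  · intro n hn
    simp only [mem_range] at hn
    simp only [mem_product, mem_range]
    exact ⟨Nat.div_lt_of_lt_mul hn, Nat.mod_lt _ hd⟩
  · intro p hp
    simp only [mem_product, mem_range] at hp
    simp only [mem_range]
    calc d * p.1 + p.2 < d * p.1 + d := by omega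
    _ = d * (p.1 + 1) := by ring
    _ ≤ d * T := Nat.mul_le_mul_left d hp.1
  · intro n _; exact Nat.div_add_mod n d
  · intro p hp
    simp only [mem_product, mem_range] at hp
    ext
    · simp [Nat.mul_add_div hd, Nat.div_eq_of_lt hp.2]
    · simp [Nat.mul_add_mod, Nat.mod_eq_of_lt hp.2]
  · intro n _
    rw [Nat.div_add_mod]

lemma sum_ite_single' (N j : ℕ) (h : j < N) (g : ℕ → ℝ) :
    ∑ n ∈ range N, (if n = j then (1:ℝ) else 0) * g n = g j := by
  have : ∀ n ∈ range N, (if n = j then (1:ℝ) else 0) * g n = if n = j then g n else 0 := by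
    intro n _; split <;> simp
  rw [Finset.sum_congr rfl this, Finset.sum_ite_eq' (range N) j g, if_pos (mem_range.2 h)]

lemma sum_ite_pair' (N j1 j2 : ℕ) (h12 : j1 ≠ j2) (h1 : j1 < N) (h2 : j2 < N) (g : ℕ → ℝ) :
    ∑ n ∈ range N, (if n = j1 ∨ n = j2 then (1:ℝ) else 0) * g n = g j1 + g j2 := by
  have : ∀ n ∈ range N, (if n = j1 ∨ n = j2 then (1:ℝ) else 0) * g n =
      (if n = j1 then (1:ℝ) else 0) * g n + (if n = j2 then (1:ℝ) else 0) * g n := by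
    intro n _
    by_cases e1 : n = j1 <;> by_cases e2 : n = j2 <;> simp_all
  rw [Finset.sum_congr rfl this, Finset.sum_add_distrib,
    sum_ite_single' N j1 h1 g, sum_ite_single' N j2 h2 g]

lemma ite_cond_congr' {C D : Prop} [Decidable C] [Decidable D] (h : C ↔ D) (a : ℝ) :
    (if C then (1:ℝ) else 0) * a = (if D then (1:ℝ) else 0) * a := by
  rw [if_congr h rfl rfl]

lemma B_unit (k : ℕ) (hk : 2 ≤ k) (hkeven : Even k)
    (B : Matrix (Fin (k + 1)) (Fin (k + 1)) ℝ)
    (hB : ∀ a b, B a b =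
      if a.val = b.val ∨ a.val = 0 ∨ a.val = b.val + 1 then 1 else 0) :
    IsUnit B := by
  rw [Matrix.isUnit_iff_isUnit_det]
  refine Ne.isUnit (fun hdet => ?_)
  obtain ⟨v, hv0, hv⟩ := Matrix.exists_mulVec_eq_zero_iff.2 hdet
  set w : ℕ → ℝ := fun n => if h : n < k + 1 then v ⟨n, h⟩ else 0 with hw
  have hvw : ∀ x : Fin (k + 1), v x = w x.val := by
    intro x
    simp only [hw, x.isLt, dite_true]
  have hrow : ∀ j, j < k + 1 →
      ∑ n ∈ Finset.range (k + 1),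
        (if j = n ∨ j = 0 ∨ j = n + 1 then (1:ℝ) else 0) * w n = 0 := by
    intro j hj
    have h0 := congrFun hv ⟨j, hj⟩
    simp only [Matrix.mulVec, dotProduct, Pi.zero_apply] at h0
    have e : ∑ x : Fin (k + 1), B ⟨j, hj⟩ x * v x = ∑ n ∈ Finset.range (k + 1),
        (if j = n ∨ j = 0 ∨ j = n + 1 then (1:ℝ) else 0) * w n := by
      rw [← Fin.sum_univ_eq_sum_range
        (fun n => (if j = n ∨ j = 0 ∨ j = n + 1 then (1:ℝ) else 0) * w n) (k+1)]
      refine Finset.sum_congr rfl (fun x _ => ?_)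
      rw [hB, hvw]
    rw [← e]
    exact h0
  have hstep : ∀ j, 1 ≤ j → j ≤ k → w j + w (j - 1) = 0 := by
    intro j h1 h2
    have h0 := hrow j (by omega)
    rw [Finset.sum_congr rfl (fun n _ => by
      rw [if_congr (show (j = n ∨ j = 0 ∨ j = n + 1) ↔ (n = j ∨ n = j - 1) by omega)
        rfl rfl])] at h0
    rwa [sum_ite_pair' (k+1) j (j-1) (by omega) (by omega) (by omega)] at h0
  have walt : ∀ j, j ≤ k → w j = (-1 : ℝ) ^ j * w 0 := by
    intro j
    induction j with
    | zero => intro _; simp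
    | succ n ih =>
      intro hn
      have e1 := hstep (n+1) (by omega) hn
      have e2 := ih (by omega)
      have : w (n+1) = -w n := by
        have : n + 1 - 1 = n := by omega
        rw [this] at e1; linarith
      rw [this, e2]; ring
  have hrow0 := hrow 0 (by omega)
  rw [Finset.sum_congr rfl (fun n _ => by
    rw [if_pos (by omega : (0 = n ∨ 0 = 0 ∨ 0 = n + 1)), one_mul])] at hrow0
  have hsum : ∑ n ∈ Finset.range (k + 1), w n = (∑ n ∈ Finset.range (k+1), (-1:ℝ)^n) * w 0 := by
    rw [Finset.sum_mul]
    refine Finset.sum_congr rfl (fun n hn => ?_)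
    rw [walt n (by simp at hn; omega)]
  have hodd : ¬ Even (k + 1) := by simp [Nat.even_add_one, hkeven]
  rw [hsum, neg_one_geom_sum, if_neg hodd, one_mul] at hrow0
  apply hv0
  funext x
  have := walt x.val (by omega)
  rw [hvw, this, hrow0]
  simp

lemma A_null (k t : ℕ) (hk : 2 ≤ k) (hkeven : Even k) (ht : 2 ≤ t)
    (A : Matrix (Fin (k * t + 1)) (Fin ((k + 1) * t)) ℝ)
    (hA : ∀ r c, A r c =
      if c.val / (k + 1) * k ≤ r.val ∧ r.val ≤ c.val / (k + 1) * k + k ∧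
        (r.val - c.val / (k + 1) * k = c.val % (k + 1) ∨
         r.val - c.val / (k + 1) * k = 0 ∨
         r.val - c.val / (k + 1) * k = c.val % (k + 1) + 1)
      then 1 else 0)
    (z : Fin ((k + 1) * t) → ℝ) (hz0 : z ≠ 0) (hAz : A.mulVec z = 0) :
    2 * k + 1 ≤ {j | z j ≠ 0}.ncard := by
  have hk1 : 0 < k + 1 := by omega
  have hpos : 0 < (k + 1) * t := Nat.mul_pos hk1 (by omega)
  have key : ∀ u v : ℕ, u < v → u * k + k ≤ v * k := by
    intro u v huv
    calc u * k + k = (u + 1) * k := by ring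
    _ ≤ v * k := Nat.mul_le_mul_right k huv
  have hidx : ∀ q m : ℕ, q < t → m ≤ k → (k + 1) * q + m < (k + 1) * t := by
    intro q m h1 h2
    calc (k + 1) * q + m < (k + 1) * q + (k + 1) := by omega
    _ = (k + 1) * (q + 1) := by ring
    _ ≤ (k + 1) * t := Nat.mul_le_mul_left _ h1
  obtain ⟨w, hwdef⟩ : ∃ w : ℕ → ℝ, ∀ n (h : n < (k + 1) * t), w n = z ⟨n, h⟩ :=
    ⟨fun n => if h : n < (k + 1) * t then z ⟨n, h⟩ else 0, fun n h => dif_pos h⟩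
  have hzw : ∀ j : Fin ((k + 1) * t), z j = w j.val := fun j => (hwdef j.val j.isLt).symm
  -- the row equations
  have rowEq : ∀ r, r < k * t + 1 → ∑ q ∈ range t, ∑ m ∈ range (k + 1),
      (if q * k ≤ r ∧ r ≤ q * k + k ∧ (r - q * k = m ∨ r - q * k = 0 ∨ r - q * k = m + 1)
       then (1:ℝ) else 0) * w ((k + 1) * q + m) = 0 := by
    intro r hr
    have h0 := congrFun hAz ⟨r, hr⟩
    simp only [Matrix.mulVec, dotProduct, Pi.zero_apply] at h0
    have e1 : ∑ c : Fin ((k + 1) * t), A ⟨r, hr⟩ c * z c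
        = ∑ c : Fin ((k + 1) * t),
          (if c.val / (k + 1) * k ≤ r ∧ r ≤ c.val / (k + 1) * k + k ∧
            (r - c.val / (k + 1) * k = c.val % (k + 1) ∨ r - c.val / (k + 1) * k = 0 ∨
             r - c.val / (k + 1) * k = c.val % (k + 1) + 1)
           then (1:ℝ) else 0) * w c.val := by
      refine Finset.sum_congr rfl (fun c _ => ?_)
      rw [hA, hzw]
    have e2 := sum_fin_mul' (k + 1) t hk1 (fun n =>
      (if n / (k + 1) * k ≤ r ∧ r ≤ n / (k + 1) * k + k ∧
        (r - n / (k + 1) * k = n % (k + 1) ∨ r - n / (k + 1) * k = 0 ∨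
         r - n / (k + 1) * k = n % (k + 1) + 1)
       then (1:ℝ) else 0) * w n)
    have e3 : ∑ q ∈ range t, ∑ m ∈ range (k + 1), (fun n =>
        (if n / (k + 1) * k ≤ r ∧ r ≤ n / (k + 1) * k + k ∧
          (r - n / (k + 1) * k = n % (k + 1) ∨ r - n / (k + 1) * k = 0 ∨
           r - n / (k + 1) * k = n % (k + 1) + 1)
         then (1:ℝ) else 0) * w n) ((k + 1) * q + m)
        = ∑ q ∈ range t, ∑ m ∈ range (k + 1),
      (if q * k ≤ r ∧ r ≤ q * k + k ∧ (r - q * k = m ∨ r - q * k = 0 ∨ r - q * k = m + 1)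
       then (1:ℝ) else 0) * w ((k + 1) * q + m) := by
      refine Finset.sum_congr rfl (fun q hq => Finset.sum_congr rfl (fun m hm => ?_))
      simp only [mem_range] at hq hm
      have hdiv : ((k + 1) * q + m) / (k + 1) = q := by
        rw [Nat.mul_add_div hk1, Nat.div_eq_of_lt hm, Nat.add_zero]
      have hmod : ((k + 1) * q + m) % (k + 1) = m := by
        rw [Nat.mul_add_mod, Nat.mod_eq_of_lt hm]
      simp only [hdiv, hmod]
    exact e3.symm.trans (e2.symm.trans (e1.symm.trans h0))
  -- vanishing of blocks whose row-range misses r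
  have houter : ∀ r q : ℕ, ¬(q * k ≤ r ∧ r ≤ q * k + k) →
      ∑ m ∈ range (k + 1),
        (if q * k ≤ r ∧ r ≤ q * k + k ∧ (r - q * k = m ∨ r - q * k = 0 ∨ r - q * k = m + 1)
         then (1:ℝ) else 0) * w ((k + 1) * q + m) = 0 := by
    intro r q hq
    refine Finset.sum_eq_zero (fun m _ => ?_)
    rw [if_neg (fun hc => hq ⟨hc.1, hc.2.1⟩), zero_mul]
  -- row 0 : sum of block 0
  have hE1 : ∑ m ∈ range (k + 1), w ((k + 1) * 0 + m) = 0 := by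
    have h := rowEq 0 (by omega)
    have h2 : ∑ q ∈ range t, ∑ m ∈ range (k + 1),
        (if q * k ≤ 0 ∧ 0 ≤ q * k + k ∧ (0 - q * k = m ∨ 0 - q * k = 0 ∨ 0 - q * k = m + 1)
         then (1:ℝ) else 0) * w ((k + 1) * q + m)
        = ∑ m ∈ range (k + 1),
        (if 0 * k ≤ 0 ∧ 0 ≤ 0 * k + k ∧ (0 - 0 * k = m ∨ 0 - 0 * k = 0 ∨ 0 - 0 * k = m + 1)
         then (1:ℝ) else 0) * w ((k + 1) * 0 + m) := by
      refine Finset.sum_eq_single_of_mem 0 (mem_range.2 (by omega)) (fun q hq hne => ?_)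
      refine houter 0 q (fun hc => ?_)
      have := key 0 q (by omega)
      omega
    rw [h2] at h
    refine Eq.trans ?_ h
    exact Finset.sum_congr rfl (fun m hm => by rw [if_pos (by omega), one_mul])
  -- rows q*k + j, 1 ≤ j ≤ k-1
  have hE2 : ∀ q j : ℕ, q < t → 1 ≤ j → j ≤ k - 1 →
      w ((k + 1) * q + j) + w ((k + 1) * q + (j - 1)) = 0 := by
    intro q j hq hj1 hj2
    have htk : t * k = k * t := by ring
    have hqt : q * k + k ≤ t * k := key q t hq
    have h := rowEq (q * k + j) (by omega)
    have h2 : ∑ q' ∈ range t, ∑ m ∈ range (k + 1),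
        (if q' * k ≤ q * k + j ∧ q * k + j ≤ q' * k + k ∧
          (q * k + j - q' * k = m ∨ q * k + j - q' * k = 0 ∨ q * k + j - q' * k = m + 1)
         then (1:ℝ) else 0) * w ((k + 1) * q' + m)
        = ∑ m ∈ range (k + 1),
        (if q * k ≤ q * k + j ∧ q * k + j ≤ q * k + k ∧
          (q * k + j - q * k = m ∨ q * k + j - q * k = 0 ∨ q * k + j - q * k = m + 1)
         then (1:ℝ) else 0) * w ((k + 1) * q + m) := by
      refine Finset.sum_eq_single_of_mem q (mem_range.2 hq) (fun q' hq' hne => ?_)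
      refine houter (q * k + j) q' (fun hc => ?_)
      rcases Nat.lt_or_ge q' q with hlt | hge
      · have := key q' q hlt
        omega
      · have hgt : q < q' := by omega
        have := key q q' hgt
        omega
    rw [h2] at h
    have h3 : ∑ m ∈ range (k + 1), (if m = j ∨ m = j - 1 then (1:ℝ) else 0) * w ((k + 1) * q + m)
        = 0 := by
      refine Eq.trans ?_ h
      refine Finset.sum_congr rfl (fun m hm => ite_cond_congr' ?_ _)
      simp only [mem_range] at hm
      omega
    rwa [sum_ite_pair' (k + 1) j (j - 1) (by omega) (by omega) (by omega)] at h3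
  -- rows q*k, 1 ≤ q ≤ t-1
  have hE3 : ∀ q : ℕ, 1 ≤ q → q < t →
      w ((k + 1) * (q - 1) + k) + w ((k + 1) * (q - 1) + (k - 1))
        + ∑ m ∈ range (k + 1), w ((k + 1) * q + m) = 0 := by
    intro q hq1 hqt
    have htk : t * k = k * t := by ring
    have hqtk : q * k + k ≤ t * k := key q t hqt
    have hq1k : (q - 1) * k + k = q * k := by
      have e : q - 1 + 1 = q := by omega
      calc (q - 1) * k + k = (q - 1 + 1) * k := by ring
      _ = q * k := by rw [e]
    have h := rowEq (q * k) (by omega)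
    have hsub : ({q - 1, q} : Finset ℕ) ⊆ range t := by
      intro u hu
      simp only [mem_insert, mem_singleton] at hu
      rcases hu with h' | h' <;> (subst h'; simp only [mem_range]; omega)
    have h2 := Finset.sum_subset hsub (f := fun q' => ∑ m ∈ range (k + 1),
        (if q' * k ≤ q * k ∧ q * k ≤ q' * k + k ∧
          (q * k - q' * k = m ∨ q * k - q' * k = 0 ∨ q * k - q' * k = m + 1)
         then (1:ℝ) else 0) * w ((k + 1) * q' + m)) ?_
    swap
    · intro q' hq' hnot
      simp only [mem_insert, mem_singleton] at hnot
      push_neg at hnot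
      refine houter (q * k) q' (fun hc => ?_)
      rcases Nat.lt_or_ge q' (q - 1) with hlt | hge
      · have h4 := key q' (q - 1) hlt
        omega
      · have hgt : q < q' := by omega
        have := key q q' hgt
        omega
    rw [← h2] at h
    rw [Finset.sum_pair (by omega : q - 1 ≠ q)] at h
    have ha : ∑ m ∈ range (k + 1),
        (if (q - 1) * k ≤ q * k ∧ q * k ≤ (q - 1) * k + k ∧
          (q * k - (q - 1) * k = m ∨ q * k - (q - 1) * k = 0 ∨ q * k - (q - 1) * k = m + 1)
         then (1:ℝ) else 0) * w ((k + 1) * (q - 1) + m)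
        = w ((k + 1) * (q - 1) + k) + w ((k + 1) * (q - 1) + (k - 1)) := by
      rw [← sum_ite_pair' (k + 1) k (k - 1) (by omega) (by omega) (by omega)
        (fun m => w ((k + 1) * (q - 1) + m))]
      refine Finset.sum_congr rfl (fun m hm => ite_cond_congr' ?_ _)
      simp only [mem_range] at hm
      omega
    have hb : ∑ m ∈ range (k + 1),
        (if q * k ≤ q * k ∧ q * k ≤ q * k + k ∧
          (q * k - q * k = m ∨ q * k - q * k = 0 ∨ q * k - q * k = m + 1)
         then (1:ℝ) else 0) * w ((k + 1) * q + m)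
        = ∑ m ∈ range (k + 1), w ((k + 1) * q + m) :=
      Finset.sum_congr rfl (fun m hm => by rw [if_pos (by omega), one_mul])
    rw [ha, hb] at h
    linarith
  -- last row k*t
  have hE4 : w ((k + 1) * (t - 1) + k) + w ((k + 1) * (t - 1) + (k - 1)) = 0 := by
    have htk : t * k = k * t := by ring
    have ht1k : (t - 1) * k + k = t * k := by
      have e : t - 1 + 1 = t := by omega
      calc (t - 1) * k + k = (t - 1 + 1) * k := by ring
      _ = t * k := by rw [e]
    have h := rowEq (k * t) (by omega)
    have h2 : ∑ q ∈ range t, ∑ m ∈ range (k + 1),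
        (if q * k ≤ k * t ∧ k * t ≤ q * k + k ∧
          (k * t - q * k = m ∨ k * t - q * k = 0 ∨ k * t - q * k = m + 1)
         then (1:ℝ) else 0) * w ((k + 1) * q + m)
        = ∑ m ∈ range (k + 1),
        (if (t - 1) * k ≤ k * t ∧ k * t ≤ (t - 1) * k + k ∧
          (k * t - (t - 1) * k = m ∨ k * t - (t - 1) * k = 0 ∨ k * t - (t - 1) * k = m + 1)
         then (1:ℝ) else 0) * w ((k + 1) * (t - 1) + m) := by
      refine Finset.sum_eq_single_of_mem (t - 1) (mem_range.2 (by omega)) (fun q hq hne => ?_)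
      simp only [mem_range] at hq
      refine houter (k * t) q (fun hc => ?_)
      have hlt : q < t - 1 := by omega
      have := key q (t - 1) hlt
      omega
    rw [h2] at h
    have h3 : ∑ m ∈ range (k + 1), (if m = k ∨ m = k - 1 then (1:ℝ) else 0)
        * w ((k + 1) * (t - 1) + m) = 0 := by
      refine Eq.trans ?_ h
      refine Finset.sum_congr rfl (fun m hm => ite_cond_congr' ?_ _)
      simp only [mem_range] at hm
      omega
    rwa [sum_ite_pair' (k + 1) k (k - 1) (by omega) (by omega) (by omega)] at h3
  -- alternating values inside each block
  have halt : ∀ q m : ℕ, q < t → m ≤ k - 1 →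
      w ((k + 1) * q + m) = (-1 : ℝ) ^ m * w ((k + 1) * q + 0) := by
    intro q m hq
    induction m with
    | zero => intro _; simp
    | succ n ih =>
      intro hn
      have e1 := hE2 q (n + 1) hq (by omega) hn
      have e2 := ih (by omega)
      simp only [Nat.add_sub_cancel] at e1
      rw [e2] at e1
      have : w ((k + 1) * q + (n + 1)) = -((-1 : ℝ) ^ n * w ((k + 1) * q + 0)) := by linarith
      rw [this]
      ring
  have hwk1 : ∀ q : ℕ, q < t →
      w ((k + 1) * q + (k - 1)) = -w ((k + 1) * q + 0) := by
    intro q hq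
    rw [halt q (k - 1) hq (le_refl _)]
    have hodd : Odd (k - 1) := Nat.Even.sub_odd (by omega) hkeven odd_one
    rw [hodd.neg_one_pow]
    ring
  have hsumk : ∀ q : ℕ, q < t → ∑ m ∈ range k, w ((k + 1) * q + m) = 0 := by
    intro q hq
    have e : ∀ m ∈ range k, w ((k + 1) * q + m) = (-1 : ℝ) ^ m * w ((k + 1) * q + 0) := by
      intro m hm
      simp only [mem_range] at hm
      exact halt q m hq (by omega)
    rw [Finset.sum_congr rfl e, ← Finset.sum_mul, neg_one_geom_sum, if_pos hkeven, zero_mul]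
  have hsumk1 : ∀ q : ℕ, q < t →
      ∑ m ∈ range (k + 1), w ((k + 1) * q + m) = w ((k + 1) * q + k) := by
    intro q hq
    rw [Finset.sum_range_succ, hsumk q hq, zero_add]
  -- the b-recursion
  have hb0 : w ((k + 1) * 0 + k) = 0 := by
    rw [hsumk1 0 (by omega)] at hE1
    exact hE1
  have hbrec : ∀ q : ℕ, 1 ≤ q → q < t →
      w ((k + 1) * q + k) = w ((k + 1) * (q - 1) + 0) - w ((k + 1) * (q - 1) + k) := by
    intro q hq1 hqt
    have h := hE3 q hq1 hqt
    rw [hsumk1 q hqt, hwk1 (q - 1) (by omega)] at h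
    linarith
  have hbt : w ((k + 1) * (t - 1) + k) = w ((k + 1) * (t - 1) + 0) := by
    have h := hE4
    rw [hwk1 (t - 1) (by omega)] at h
    linarith
  -- some b is nonzero
  have hbne : ∃ q, q < t ∧ w ((k + 1) * q + k) ≠ 0 := by
    by_contra hcon
    push_neg at hcon
    have ha : ∀ q, q < t → w ((k + 1) * q + 0) = 0 := by
      intro q hq
      rcases Nat.lt_or_ge q (t - 1) with h | h
      · have hr := hbrec (q + 1) (by omega) (by omega)
        simp only [Nat.add_sub_cancel] at hr
        rw [hcon (q + 1) (by omega), hcon q hq] at hr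
        linarith
      · have hq' : q = t - 1 := by omega
        subst hq'
        rw [← hbt]
        exact hcon (t - 1) (by omega)
    apply hz0
    funext j
    have hj := j.isLt
    have hqt : j.val / (k + 1) < t := Nat.div_lt_of_lt_mul hj
    have hmk : j.val % (k + 1) < k + 1 := Nat.mod_lt _ hk1
    have hdm : (k + 1) * (j.val / (k + 1)) + j.val % (k + 1) = j.val :=
      Nat.div_add_mod j.val (k + 1)
    have hzj : z j = w ((k + 1) * (j.val / (k + 1)) + j.val % (k + 1)) := by
      rw [hzw, hdm]
    rcases Nat.lt_or_ge (j.val % (k + 1)) k with hmlt | hge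
    · rw [Pi.zero_apply, hzj, halt _ _ hqt (by omega), ha _ hqt, mul_zero]
    · have hm' : j.val % (k + 1) = k := by omega
      rw [Pi.zero_apply, hzj, hm', hcon _ hqt]
  obtain ⟨q0, hq0t, hq0⟩ := hbne
  -- some a is nonzero
  have hane : ∃ i, i < t ∧ w ((k + 1) * i + 0) ≠ 0 := by
    by_contra hcon
    push_neg at hcon
    have hball : ∀ q, q < t → w ((k + 1) * q + k) = 0 := by
      intro q
      induction q with
      | zero => intro _; exact hb0
      | succ n ih =>
        intro hq
        have hr := hbrec (n + 1) (by omega) hq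
        simp only [Nat.add_sub_cancel] at hr
        rw [hcon n (by omega), ih (by omega)] at hr
        simpa using hr
    exact hq0 (hball q0 hq0t)
  obtain ⟨i1, hi1t, hi1⟩ := hane
  -- a second nonzero a
  have hane2 : ∃ i2, i2 < t ∧ i2 ≠ i1 ∧ w ((k + 1) * i2 + 0) ≠ 0 := by
    by_contra hcon
    push_neg at hcon
    have claim1 : ∀ q, q ≤ i1 → w ((k + 1) * q + k) = 0 := by
      intro q
      induction q with
      | zero => intro _; exact hb0
      | succ n ih =>
        intro hq
        have hr := hbrec (n + 1) (by omega) (by omega)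
        simp only [Nat.add_sub_cancel] at hr
        rw [hcon n (by omega) (by omega), ih (by omega)] at hr
        simpa using hr
    have claim2 : ∀ q, i1 < q → q < t → w ((k + 1) * q + k) ≠ 0 := by
      intro q
      induction q with
      | zero => intro hlt _; omega
      | succ n ih =>
        intro hlt hq
        have hr := hbrec (n + 1) (by omega) hq
        simp only [Nat.add_sub_cancel] at hr
        rcases Nat.lt_or_ge i1 n with hlt' | hge'
        · rw [hcon n (by omega) (by omega)] at hr
          have hihn := ih hlt' (by omega)
          intro h0
          rw [h0] at hr
          apply hihn
          linarith
        · have hni : n = i1 := by omega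
          subst hni
          rw [claim1 n (le_refl _)] at hr
          rw [hr]
          simpa using hi1
    rcases Nat.lt_or_ge i1 (t - 1) with hc | hc
    · have h1 := claim2 (t - 1) hc (by omega)
      rw [hbt] at h1
      exact h1 (hcon (t - 1) (by omega) (by omega))
    · have hi1e : i1 = t - 1 := by omega
      have h1 := claim1 (t - 1) (by omega)
      rw [hbt] at h1
      apply hi1
      rw [hi1e]
      exact h1
  obtain ⟨i2, hi2t, hi2ne, hi2⟩ := hane2
  -- counting
  classical
  obtain ⟨f, hfdef⟩ : ∃ f : ℕ × ℕ → Fin ((k + 1) * t),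
      ∀ p : ℕ × ℕ, ∀ h : (k + 1) * p.1 + p.2 < (k + 1) * t, f p = ⟨(k + 1) * p.1 + p.2, h⟩ :=
    ⟨fun p => if h : (k + 1) * p.1 + p.2 < (k + 1) * t then ⟨_, h⟩ else ⟨0, hpos⟩,
     fun p h => dif_pos h⟩
  have hsetF : {j | z j ≠ 0} = ↑(Finset.univ.filter (fun j => z j ≠ 0)) := by
    ext j; simp
  rw [hsetF, Set.ncard_coe_finset]
  set s : Finset (ℕ × ℕ) := ({i1, i2} : Finset ℕ) ×ˢ range k ∪ {(q0, k)} with hs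
  have hmem : ∀ p ∈ s, p.1 < t ∧ p.2 ≤ k ∧ w ((k + 1) * p.1 + p.2) ≠ 0 := by
    intro p hp
    simp only [hs, mem_union, mem_product, mem_insert, mem_singleton, mem_range] at hp
    rcases hp with ⟨hp1, hp2⟩ | hp
    · have hp1t : p.1 < t := by rcases hp1 with h | h <;> (rw [h]; assumption)
      have hwa : w ((k + 1) * p.1 + 0) ≠ 0 := by
        rcases hp1 with h | h <;> (rw [h]; assumption)
      refine ⟨hp1t, by omega, ?_⟩
      rw [halt p.1 p.2 hp1t (by omega)]
      exact mul_ne_zero (pow_ne_zero _ (by norm_num)) hwa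
    · have e1 : p.1 = q0 := by rw [hp]
      have e2 : p.2 = k := by rw [hp]
      rw [e1, e2]
      exact ⟨hq0t, le_refl _, hq0⟩
  have hdisj : Disjoint (({i1, i2} : Finset ℕ) ×ˢ range k) ({(q0, k)} : Finset (ℕ × ℕ)) := by
    simp only [Finset.disjoint_singleton_right, mem_product, mem_range]
    intro hc
    exact absurd hc.2 (by omega)
  have hcard : s.card = 2 * k + 1 := by
    rw [hs, Finset.card_union_of_disjoint hdisj, Finset.card_product, Finset.card_range,
      Finset.card_singleton,
      Finset.card_insert_of_notMem
        (by simp only [Finset.mem_singleton]; exact fun h => hi2ne h.symm),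
      Finset.card_singleton]
  rw [← hcard]
  refine Finset.card_le_card_of_injOn f (fun p hp => ?_) ?_
  · obtain ⟨h1, h2, h3⟩ := hmem p hp
    have hb := hidx p.1 p.2 h1 h2
    simp only [Finset.mem_coe, Finset.mem_filter, Finset.mem_univ, true_and]
    rw [hfdef p hb, ← hwdef _ hb]
    exact h3
  · intro p hp p' hp' he
    obtain ⟨h1, h2, _⟩ := hmem p (Finset.mem_coe.mp hp)
    obtain ⟨h1', h2', _⟩ := hmem p' (Finset.mem_coe.mp hp')
    have hb := hidx p.1 p.2 h1 h2
    have hb' := hidx p'.1 p'.2 h1' h2'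
    rw [hfdef p hb, hfdef p' hb'] at he
    have hv : (k + 1) * p.1 + p.2 = (k + 1) * p'.1 + p'.2 := by
      simpa using he
    obtain ⟨e1, e2⟩ := enc_inj' (show p.2 < k + 1 by omega) (show p'.2 < k + 1 by omega) hv
    exact Prod.ext e1 e2

/-- The `(k+1) × (k+1)` matrix `B^k` (ones on the diagonal, the first row, and
the subdiagonal, for even `k ≥ 2`) is invertible, and the `(kt+1) × (k+1)t`
block matrix `A` built from overlapping copies of `B^k` has the property that
every nonzero null vector has at least `2k+1` nonzero entries. -/
theorem stmt_16 (k t : ℕ) (hk : 2 ≤ k) (hkeven : Even k) (ht : 2 ≤ t)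
    (B : Matrix (Fin (k + 1)) (Fin (k + 1)) ℝ)
    (hB : ∀ a b, B a b =
      if a.val = b.val ∨ a.val = 0 ∨ a.val = b.val + 1 then 1 else 0)
    (A : Matrix (Fin (k * t + 1)) (Fin ((k + 1) * t)) ℝ)
    (hA : ∀ r c, A r c =
      if c.val / (k + 1) * k ≤ r.val ∧ r.val ≤ c.val / (k + 1) * k + k ∧
        (r.val - c.val / (k + 1) * k = c.val % (k + 1) ∨
         r.val - c.val / (k + 1) * k = 0 ∨
         r.val - c.val / (k + 1) * k = c.val % (k + 1) + 1)
      then 1 else 0) :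
    IsUnit B ∧
    ∀ z : Fin ((k + 1) * t) → ℝ, z ≠ 0 → A.mulVec z = 0 →
      2 * k + 1 ≤ {j | z j ≠ 0}.ncard := by
  exact ⟨B_unit k hk hkeven B hB,
    fun z hz0 hAz => A_null k t hk hkeven ht A hA z hz0 hAz⟩
end

section
/- Let G be a connected graph with radius R (R = min over u of max over v of the graph distance d(u,v)). Suppose there is a procedure that, given any graph on s nodes, recovers k-sparse vectors with f(k,s) measurements when arbitrary subsets can be measured. Then the iterative leaf-stripping algorithm (repeatedly: root a BFS spanning tree at a center node, measure the leaf set using the non-leaf nodes as a hub with f(k,n)+1 measurements, then contract the leaves) terminates after at most R iterations, producing at most R·f(k,n) + R + 1 measurements, each supported on a connected induced subgraph of G, that identify all k-sparse vectors on G. -/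
lemma induce_connected_aux {V : Type*} (G : SimpleGraph V) (T : Set V) (u : V) (hu : u ∈ T)
    (h : ∀ v ∈ T, v ≠ u → ∃ w ∈ T, G.Adj w v ∧ G.dist u w < G.dist u v) :
    (G.induce T).Connected := by
  rw [SimpleGraph.connected_iff]
  refine ⟨?_, ⟨⟨u, hu⟩⟩⟩
  have key : ∀ d : ℕ, ∀ v, ∀ hv : v ∈ T, G.dist u v ≤ d →
      (G.induce T).Reachable ⟨u, hu⟩ ⟨v, hv⟩ := by
    intro d
    induction d with
    | zero =>
      intro v hv hd
      by_cases hvu : v = u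
      · subst hvu; exact SimpleGraph.Reachable.refl _
      · obtain ⟨w, hw, hadj, hlt⟩ := h v hv hvu; omega
    | succ d ih =>
      intro v hv hd
      by_cases hvu : v = u
      · subst hvu; exact SimpleGraph.Reachable.refl _
      · obtain ⟨w, hwT, hadj, hlt⟩ := h v hv hvu
        have hr := ih w hwT (by omega)
        have hadj' : (G.induce T).Adj ⟨w, hwT⟩ ⟨v, hv⟩ := hadj
        exact hr.trans hadj'.reachable
  intro a b
  exact ((key (G.dist u a) a a.2 le_rfl).symm.trans (key (G.dist u b) b b.2 le_rfl))

lemma exists_closer_neighbor {V : Type*} {G : SimpleGraph V} (hconn : G.Connected)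
    {u v : V} {d : ℕ} (hd : G.dist u v = d + 1) :
    ∃ w, G.Adj w v ∧ G.dist u w = d := by
  obtain ⟨p, hp⟩ := hconn.exists_walk_length_eq_dist u v
  rw [hd] at hp
  cases hq : p.reverse with
  | nil =>
    have : p.length = 0 := by
      have := congrArg SimpleGraph.Walk.length hq
      simpa using this
    omega
  | cons hadj q =>
    rename_i w
    refine ⟨w, hadj.symm, ?_⟩
    have hlen : q.length = d := by
      have := congrArg SimpleGraph.Walk.length hq
      simp [SimpleGraph.Walk.length_reverse] at this
      omega
    have h1 : G.dist u w ≤ d := by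
      have := SimpleGraph.dist_le q.reverse
      simpa [hlen] using this
    have h2 : d ≤ G.dist u w := by
      have htri := hconn.dist_triangle (u := u) (v := w) (w := v)
      have : G.dist w v ≤ 1 := SimpleGraph.dist_le hadj.symm.toWalk
      omega
    omega

/-- Guarantee of the iterative leaf-stripping measurement construction on a
connected graph of radius `R`: given, for every size `s`, a 0-1 measurement
matrix with `f k s` rows identifying `k`-sparse vectors (complete-graph case,
`f` monotone in `s`), there exists a feasible (connected-support) 0-1
measurement scheme on `G` with at most `R·f(k,n) + R + 1` measurements that
identifies all `k`-sparse vectors on `G`. -/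
theorem stmt_18 {V : Type*} [Fintype V] [DecidableEq V] [Nonempty V]
    (G : SimpleGraph V) (hconn : G.Connected) (R k : ℕ)
    (hR1 : ∃ u : V, Finset.univ.sup (fun v => G.dist u v) = R)
    (hR2 : ∀ u : V, R ≤ Finset.univ.sup (fun v => G.dist u v))
    (f : ℕ → ℕ → ℕ) (hmono : ∀ s s' : ℕ, s ≤ s' → f k s ≤ f k s')
    (hf : ∀ s : ℕ, ∃ B : Matrix (Fin (f k s)) (Fin s) ℝ,
      (∀ a b, B a b = 0 ∨ B a b = 1) ∧
      ∀ x₁ x₂ : Fin s → ℝ, {j | x₁ j ≠ 0}.ncard ≤ k → {j | x₂ j ≠ 0}.ncard ≤ k →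
        B.mulVec x₁ = B.mulVec x₂ → x₁ = x₂) :
    ∃ m, m ≤ R * f k (Fintype.card V) + R + 1 ∧
      ∃ A : Matrix (Fin m) V ℝ,
        (∀ a j, A a j = 0 ∨ A a j = 1) ∧
        (∀ a, (G.induce {j | A a j = 1}).Connected) ∧
        (∀ x₁ x₂ : V → ℝ, {j | x₁ j ≠ 0}.ncard ≤ k → {j | x₂ j ≠ 0}.ncard ≤ k →
          A.mulVec x₁ = A.mulVec x₂ → x₁ = x₂) := by
  classical
  obtain ⟨u, hu⟩ := hR1
  set n := Fintype.card V with hn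
  set F := f k n with hF
  obtain ⟨B, hB01, hBid⟩ := hf n
  set e : V ≃ Fin n := Fintype.equivFin V with he
  -- distance bound
  have hdist : ∀ v : V, G.dist u v ≤ R := by
    intro v
    rw [← hu]
    exact Finset.le_sup (Finset.mem_univ v)
  -- index type
  let I := (Fin R × Option (Fin F)) ⊕ Unit
  -- supports
  let S : I → Set V := fun a =>
    match a with
    | Sum.inr _ => {u}
    | Sum.inl (i, none) => {v | G.dist u v ≤ (i : ℕ)}
    | Sum.inl (i, some r) => {v | G.dist u v ≤ (i : ℕ) ∨ (G.dist u v = (i : ℕ) + 1 ∧ B r (e v) = 1)}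
  let A' : Matrix I V ℝ := fun a v => if v ∈ S a then 1 else 0
  have hA'01 : ∀ a v, A' a v = 0 ∨ A' a v = 1 := by
    intro a v
    by_cases h : v ∈ S a <;> simp [A', h]
  have hsupp : ∀ a : I, {j | A' a j = 1} = S a := by
    intro a
    ext v
    by_cases h : v ∈ S a <;> simp [A', h]
  -- u belongs to each support
  have huS : ∀ a : I, u ∈ S a := by
    intro a
    match a with
    | Sum.inr _ => exact rfl
    | Sum.inl (i, none) => simp [S, SimpleGraph.dist_self]
    | Sum.inl (i, some r) => exact Or.inl (by simp [SimpleGraph.dist_self])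
  -- connectivity of supports
  have hconnS : ∀ a : I, (G.induce (S a)).Connected := by
    intro a
    apply induce_connected_aux G (S a) u (huS a)
    intro v hv hvu
    have hpos : 0 < G.dist u v := hconn.pos_dist_of_ne (Ne.symm hvu)
    obtain ⟨d, hd⟩ : ∃ d, G.dist u v = d + 1 := ⟨G.dist u v - 1, by omega⟩
    obtain ⟨w, hadj, hw⟩ := exists_closer_neighbor hconn hd
    refine ⟨w, ?_, hadj, by omega⟩
    match a with
    | Sum.inr _ => exact absurd hv hvu
    | Sum.inl (i, none) =>
      have : G.dist u v ≤ (i:ℕ) := hv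
      simp only [S, Set.mem_setOf_eq]
      omega
    | Sum.inl (i, some r) =>
      rcases hv with hv1 | hv2
      · exact Or.inl (show G.dist u w ≤ (i:ℕ) by omega)
      · obtain ⟨h1, _⟩ := hv2
        exact Or.inl (show G.dist u w ≤ (i:ℕ) by omega)
  -- row values
  have hrow : ∀ (x : V → ℝ) (a : I), (A'.mulVec x) a = ∑ v, if v ∈ S a then x v else 0 := by
    intro x a
    simp only [Matrix.mulVec, dotProduct, A']
    exact Finset.sum_congr rfl fun v _ => by by_cases h : v ∈ S a <;> simp [h]
  -- identification with the I-indexed matrix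
  have hident : ∀ x₁ x₂ : V → ℝ, {j | x₁ j ≠ 0}.ncard ≤ k → {j | x₂ j ≠ 0}.ncard ≤ k →
      A'.mulVec x₁ = A'.mulVec x₂ → x₁ = x₂ := by
    intro x₁ x₂ h1 h2 hAx
    -- value at u
    have hatu : x₁ u = x₂ u := by
      have := congrFun hAx (Sum.inr ())
      rw [hrow, hrow] at this
      simpa [S, Set.mem_singleton_iff, Finset.sum_ite_eq' Finset.univ u] using this
    -- layer recovery
    have hlayer : ∀ i : Fin R, ∀ v : V, G.dist u v = (i : ℕ) + 1 → x₁ v = x₂ v := by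
      intro i v hv
      set y : (V → ℝ) → Fin n → ℝ :=
        fun x t => if G.dist u (e.symm t) = (i : ℕ) + 1 then x (e.symm t) else 0 with hy
      have hBy : ∀ x : V → ℝ,
          B.mulVec (y x) = fun r =>
            (A'.mulVec x) (Sum.inl (i, some r)) - (A'.mulVec x) (Sum.inl (i, none)) := by
        intro x
        funext r
        rw [hrow, hrow]
        have lhs_eq : B.mulVec (y x) r
            = ∑ v : V, if G.dist u v = (i : ℕ) + 1 then B r (e v) * x v else 0 := by
          simp only [Matrix.mulVec, dotProduct, hy]
          rw [← Equiv.sum_comp e (fun t => B r t * (if G.dist u (e.symm t) = (i : ℕ) + 1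
            then x (e.symm t) else 0))]
          refine Finset.sum_congr rfl fun v _ => ?_
          simp only [Equiv.symm_apply_apply]
          by_cases h : G.dist u v = (i : ℕ) + 1 <;> simp [h]
        rw [lhs_eq, ← Finset.sum_sub_distrib]
        refine Finset.sum_congr rfl fun v _ => ?_
        by_cases hle : G.dist u v ≤ (i : ℕ)
        · have hne : ¬ G.dist u v = (i : ℕ) + 1 := by omega
          have hmem : v ∈ S (Sum.inl (i, some r)) := Or.inl hle
          have hmem' : v ∈ S (Sum.inl (i, none)) := hle
          simp [hne, hmem, hmem']
        · have hmem' : v ∉ S (Sum.inl (i, none)) := hle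
          by_cases heq : G.dist u v = (i : ℕ) + 1
          · rcases hB01 r (e v) with hb | hb
            · have hmem : v ∉ S (Sum.inl (i, some r)) := by
                intro hc
                rcases hc with hc | hc
                · exact hle hc
                · rw [hb] at hc; exact one_ne_zero hc.2.symm
              simp [heq, hb, hmem, hmem']
            · have hmem : v ∈ S (Sum.inl (i, some r)) := Or.inr ⟨heq, hb⟩
              simp [heq, hb, hmem, hmem']
          · have hmem : v ∉ S (Sum.inl (i, some r)) := by
              intro hc
              rcases hc with hc | hc
              · exact hle hc
              · exact heq hc.1
            simp [heq, hmem, hmem']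
      have hyeq : y x₁ = y x₂ := by
        have hsp : ∀ x : V → ℝ, {j | x j ≠ 0}.ncard ≤ k → {t | y x t ≠ 0}.ncard ≤ k := by
          intro x hx
          have hsub : {t | y x t ≠ 0} ⊆ (⇑e) '' {j | x j ≠ 0} := by
            intro t ht
            have hxt : x (e.symm t) ≠ 0 := by
              simp only [hy, Set.mem_setOf_eq] at ht
              by_cases h : G.dist u (e.symm t) = (i : ℕ) + 1
              · simpa [h] using ht
              · simp [h] at ht
            exact ⟨e.symm t, hxt, by simp⟩
          calc {t | y x t ≠ 0}.ncard ≤ ((⇑e) '' {j | x j ≠ 0}).ncard :=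
                Set.ncard_le_ncard hsub (Set.toFinite _)
            _ = {j | x j ≠ 0}.ncard := Set.ncard_image_of_injective _ e.injective
            _ ≤ k := hx
        refine hBid (y x₁) (y x₂) (hsp x₁ h1) (hsp x₂ h2) ?_
        rw [hBy x₁, hBy x₂, hAx]
      have := congrFun hyeq (e v)
      simpa [hy, Equiv.symm_apply_apply, hv] using this
    funext v
    rcases Nat.eq_zero_or_pos (G.dist u v) with h0 | hpos
    · have : u = v := hconn.dist_eq_zero_iff.mp h0
      rw [← this]; exact hatu
    · have hle := hdist v
      have hi : G.dist u v - 1 < R := by omega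
      exact hlayer ⟨G.dist u v - 1, hi⟩ v (by simp; omega)
  -- repackage over Fin m
  refine ⟨Fintype.card I, ?_, ?_⟩
  · have : Fintype.card I = R * F + R + 1 := by
      simp [I, Fintype.card_sum, Fintype.card_prod, Fintype.card_option]
      ring
    omega
  · set e2 : Fin (Fintype.card I) ≃ I := (Fintype.equivFin I).symm with he2
    refine ⟨fun a v => A' (e2 a) v, fun a j => hA'01 _ _, fun a => ?_, ?_⟩
    · have : {j | A' (e2 a) j = 1} = S (e2 a) := hsupp _
      rw [this]
      exact hconnS _
    · intro x₁ x₂ h1 h2 hAx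
      refine hident x₁ x₂ h1 h2 ?_
      funext a
      have := congrFun hAx (e2.symm a)
      simpa [Matrix.mulVec, dotProduct] using this
end
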